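/- arXiv:2301.04439 — 3 statements merged into one kernel-verified Lean document; each statement's English description precedes it below -/
import Mathlib

section
/- In the error-in-variables model, if ξ, ε, u have finite third absolute moments and β₀ · E[ξ³] ≠ 0, then for every real number β one has E[x y² − β x² y] = 0 if and only if β = β₀; that is, β₀ is the unique solution of the population moment condition E[x y² − β x² y] = 0. -/
open MeasureTheory ProbabilityTheory Filter Real ENNReal

private lemma memℒp_sq_of_three {Ω : Type*} [MeasurableSpace Ω] {μ : Measure Ω}
    {f : Ω → ℝ} (hf : MemLp f 3 μ) :
    MemLp (fun ω => f ω ^ 2) (3/2) μ := by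
  have h : MemLp (f • f) (3/2) μ := by
    haveI : ENNReal.HolderTriple 3 3 (3/2) := ⟨by
      rw [ENNReal.inv_div (by norm_num) (by norm_num), ← one_div, ENNReal.div_add_div_same]
      norm_num⟩
    exact hf.smul hf
  have : (f • f) = fun ω => f ω ^ 2 := by funext ω; simp [sq]
  rwa [this] at h

private lemma integrable_cube_of_three {Ω : Type*} [MeasurableSpace Ω] {μ : Measure Ω}
    {f : Ω → ℝ} (hf : MemLp f 3 μ) :
    Integrable (fun ω => f ω ^ 3) μ := by
  have h2 := memℒp_sq_of_three hf
  have h3 : MemLp (f • (fun ω => f ω ^ 2)) 1 μ := by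
    haveI : ENNReal.HolderTriple 3 (3/2) 1 := ⟨by
      rw [ENNReal.inv_div (by norm_num) (by norm_num), inv_one, ← one_div,
        ENNReal.div_add_div_same, show (1:ℝ≥0∞)+2 = 3 by norm_num]
      exact ENNReal.div_self (by norm_num) (by norm_num)⟩
    exact MemLp.smul h2 hf
  have : (f • (fun ω => f ω ^ 2)) = fun ω => f ω ^ 3 := by funext ω; simp; ring
  rw [this] at h3
  exact memLp_one_iff_integrable.mp h3

/-- In the error-in-variables model with finite third absolute moments
and β₀ · E[ξ³] ≠ 0, β₀ is the unique solution β of the population moment condition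
E[x y² − β x² y] = 0. -/
theorem eiv_moment_condition_unique_solution
    {Ω : Type*} [MeasurableSpace Ω] (μ : Measure Ω) [IsProbabilityMeasure μ]
    (ξ ε u : Ω → ℝ) (β₀ : ℝ)
    (hmξ : Measurable ξ) (hmε : Measurable ε) (hmu : Measurable u)
    (hindep : iIndepFun ![ξ, ε, u] μ)
    (hξ0 : ∫ ω, ξ ω ∂μ = 0) (hε0 : ∫ ω, ε ω ∂μ = 0) (hu0 : ∫ ω, u ω ∂μ = 0)
    (hξ3 : MemLp ξ 3 μ) (hε3 : MemLp ε 3 μ) (hu3 : MemLp u 3 μ)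
    (hβξ : β₀ * ∫ ω, (ξ ω) ^ 3 ∂μ ≠ 0) :
    ∀ β : ℝ,
      (∫ ω, ((ξ ω + u ω) * (ξ ω * β₀ + ε ω) ^ 2
        - β * ((ξ ω + u ω) ^ 2 * (ξ ω * β₀ + ε ω))) ∂μ = 0) ↔ β = β₀ := by
  -- basic integrability
  have one_le_three : (1:ℝ≥0∞) ≤ 3 := by norm_num
  have one_le_32 : (1:ℝ≥0∞) ≤ 3/2 := by
    rw [ENNReal.le_div_iff_mul_le (Or.inl (by norm_num)) (Or.inl (by norm_num))]
    norm_num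
  have intξ : Integrable ξ μ := hξ3.integrable one_le_three
  have intε : Integrable ε μ := hε3.integrable one_le_three
  have intu : Integrable u μ := hu3.integrable one_le_three
  have intξ2 : Integrable (fun ω => ξ ω ^ 2) μ := (memℒp_sq_of_three hξ3).integrable one_le_32
  have intε2 : Integrable (fun ω => ε ω ^ 2) μ := (memℒp_sq_of_three hε3).integrable one_le_32
  have intu2 : Integrable (fun ω => u ω ^ 2) μ := (memℒp_sq_of_three hu3).integrable one_le_32
  have intξ3 : Integrable (fun ω => ξ ω ^ 3) μ := integrable_cube_of_three hξ3
  have hmeas : ∀ i, Measurable (![ξ, ε, u] i) := by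
    intro i; fin_cases i <;> simpa using ‹_›
  -- pairwise independences
  have hξε : IndepFun ξ ε μ := hindep.indepFun (i := 0) (j := 1) (by decide)
  have hξu : IndepFun ξ u μ := hindep.indepFun (i := 0) (j := 2) (by decide)
  have hεu : IndepFun ε u μ := hindep.indepFun (i := 1) (j := 2) (by decide)
  have hξuε : IndepFun (ξ * u) ε μ :=
    hindep.indepFun_mul_left hmeas 0 2 1 (by decide) (by decide)
  have m2 : Measurable (fun x : ℝ => x ^ 2) := measurable_id.pow_const 2
  have hξ2ε : IndepFun (fun ω => ξ ω ^ 2) ε μ := hξε.comp m2 measurable_id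
  have hξε2 : IndepFun ξ (fun ω => ε ω ^ 2) μ := hξε.comp measurable_id m2
  have hξ2u : IndepFun (fun ω => ξ ω ^ 2) u μ := hξu.comp m2 measurable_id
  have hξu2 : IndepFun ξ (fun ω => u ω ^ 2) μ := hξu.comp measurable_id m2
  have hε2u : IndepFun (fun ω => ε ω ^ 2) u μ := hεu.comp m2 measurable_id
  have hεu2 : IndepFun ε (fun ω => u ω ^ 2) μ := hεu.comp measurable_id m2
  -- integrability of monomials
  have I2 : Integrable (fun ω => ξ ω ^ 2 * ε ω) μ := hξ2ε.integrable_mul intξ2 intε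
  have I3 : Integrable (fun ω => ξ ω * ε ω ^ 2) μ := hξε2.integrable_mul intξ intε2
  have I4 : Integrable (fun ω => ξ ω ^ 2 * u ω) μ := hξ2u.integrable_mul intξ2 intu
  have Iξu : Integrable (fun ω => ξ ω * u ω) μ := hξu.integrable_mul intξ intu
  have I5 : Integrable (fun ω => ξ ω * u ω * ε ω) μ := hξuε.integrable_mul Iξu intε
  have I6 : Integrable (fun ω => ε ω ^ 2 * u ω) μ := hε2u.integrable_mul intε2 intu
  have I7 : Integrable (fun ω => ξ ω * u ω ^ 2) μ := hξu2.integrable_mul intξ intu2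
  have I8 : Integrable (fun ω => ε ω * u ω ^ 2) μ := hεu2.integrable_mul intε intu2
  -- values of moments
  have E2 : ∫ ω, ξ ω ^ 2 * ε ω ∂μ = 0 := by
    calc ∫ ω, ξ ω ^ 2 * ε ω ∂μ = (∫ ω, ξ ω ^ 2 ∂μ) * ∫ ω, ε ω ∂μ :=
          hξ2ε.integral_fun_mul_eq_mul_integral intξ2.1 intε.1
      _ = 0 := by rw [hε0, mul_zero]
  have E3 : ∫ ω, ξ ω * ε ω ^ 2 ∂μ = 0 := by
    calc ∫ ω, ξ ω * ε ω ^ 2 ∂μ = (∫ ω, ξ ω ∂μ) * ∫ ω, ε ω ^ 2 ∂μ :=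
          hξε2.integral_fun_mul_eq_mul_integral intξ.1 intε2.1
      _ = 0 := by rw [hξ0, zero_mul]
  have E4 : ∫ ω, ξ ω ^ 2 * u ω ∂μ = 0 := by
    calc ∫ ω, ξ ω ^ 2 * u ω ∂μ = (∫ ω, ξ ω ^ 2 ∂μ) * ∫ ω, u ω ∂μ :=
          hξ2u.integral_fun_mul_eq_mul_integral intξ2.1 intu.1
      _ = 0 := by rw [hu0, mul_zero]
  have E5 : ∫ ω, ξ ω * u ω * ε ω ∂μ = 0 := by
    calc ∫ ω, ξ ω * u ω * ε ω ∂μ = (∫ ω, ξ ω * u ω ∂μ) * ∫ ω, ε ω ∂μ :=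
          hξuε.integral_fun_mul_eq_mul_integral Iξu.1 intε.1
      _ = 0 := by rw [hε0, mul_zero]
  have E6 : ∫ ω, ε ω ^ 2 * u ω ∂μ = 0 := by
    calc ∫ ω, ε ω ^ 2 * u ω ∂μ = (∫ ω, ε ω ^ 2 ∂μ) * ∫ ω, u ω ∂μ :=
          hε2u.integral_fun_mul_eq_mul_integral intε2.1 intu.1
      _ = 0 := by rw [hu0, mul_zero]
  have E7 : ∫ ω, ξ ω * u ω ^ 2 ∂μ = 0 := by
    calc ∫ ω, ξ ω * u ω ^ 2 ∂μ = (∫ ω, ξ ω ∂μ) * ∫ ω, u ω ^ 2 ∂μ :=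
          hξu2.integral_fun_mul_eq_mul_integral intξ.1 intu2.1
      _ = 0 := by rw [hξ0, zero_mul]
  have E8 : ∫ ω, ε ω * u ω ^ 2 ∂μ = 0 := by
    calc ∫ ω, ε ω * u ω ^ 2 ∂μ = (∫ ω, ε ω ∂μ) * ∫ ω, u ω ^ 2 ∂μ :=
          hεu2.integral_fun_mul_eq_mul_integral intε.1 intu2.1
      _ = 0 := by rw [hε0, zero_mul]
  intro β
  set A : ℝ := ∫ ω, (ξ ω) ^ 3 ∂μ with hA
  have key : ∫ ω, ((ξ ω + u ω) * (ξ ω * β₀ + ε ω) ^ 2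
      - β * ((ξ ω + u ω) ^ 2 * (ξ ω * β₀ + ε ω))) ∂μ = (β₀ - β) * (β₀ * A) := by
    have hfun : (fun ω => (ξ ω + u ω) * (ξ ω * β₀ + ε ω) ^ 2
        - β * ((ξ ω + u ω) ^ 2 * (ξ ω * β₀ + ε ω)))
        = fun ω => (β₀ ^ 2 - β * β₀) * ξ ω ^ 3
          + ((2 * β₀ - β) * (ξ ω ^ 2 * ε ω)
          + (ξ ω * ε ω ^ 2
          + ((β₀ ^ 2 - 2 * β * β₀) * (ξ ω ^ 2 * u ω)
          + ((2 * β₀ - 2 * β) * (ξ ω * u ω * ε ω)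
          + (ε ω ^ 2 * u ω
          + ((-(β * β₀)) * (ξ ω * u ω ^ 2)
          + (-β) * (ε ω * u ω ^ 2))))))) := by
      funext ω; ring
    rw [hfun]
    have J2 := I2.const_mul (2 * β₀ - β)
    have J4 := I4.const_mul (β₀ ^ 2 - 2 * β * β₀)
    have J5 := I5.const_mul (2 * β₀ - 2 * β)
    have J7 := I7.const_mul (-(β * β₀))
    have J8 := I8.const_mul (-β)
    have A1 : ∫ ω, ((β₀ ^ 2 - β * β₀) * ξ ω ^ 3 + ((2 * β₀ - β) * (ξ ω ^ 2 * ε ω) + (ξ ω * ε ω ^ 2 + ((β₀ ^ 2 - 2 * β * β₀) * (ξ ω ^ 2 * u ω) + ((2 * β₀ - 2 * β) * (ξ ω * u ω * ε ω) + (ε ω ^ 2 * u ω + ((-(β * β₀)) * (ξ ω * u ω ^ 2) + (-β) * (ε ω * u ω ^ 2)))))))) ∂μ = (∫ ω, (β₀ ^ 2 - β * β₀) * ξ ω ^ 3 ∂μ) + ∫ ω, ((2 * β₀ - β) * (ξ ω ^ 2 * ε ω) + (ξ ω * ε ω ^ 2 + ((β₀ ^ 2 - 2 * β * β₀) * (ξ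 ω ^ 2 * u ω) + ((2 * β₀ - 2 * β) * (ξ ω * u ω * ε ω) + (ε ω ^ 2 * u ω + ((-(β * β₀)) * (ξ ω * u ω ^ 2) + (-β) * (ε ω * u ω ^ 2))))))) ∂μ := integral_add (intξ3.const_mul (β₀ ^ 2 - β * β₀)) ((J2).add ((I3).add ((J4).add ((J5).add ((I6).add ((J7).add (J8)))))))
    have A2 : ∫ ω, ((2 * β₀ - β) * (ξ ω ^ 2 * ε ω) + (ξ ω * ε ω ^ 2 + ((β₀ ^ 2 - 2 * β * β₀) * (ξ ω ^ 2 * u ω) + ((2 * β₀ - 2 * β) * (ξ ω * u ω * ε ω) + (ε ω ^ 2 * u ω + ((-(β * β₀)) * (ξ ω * u ω ^ 2) + (-β) * (ε ω * u ω ^ 2))))))) ∂μ = (∫ ω, (2 * β₀ - β) * (ξ ω ^ 2 * ε ω) ∂μ) + ∫ ω, (ξ ω * ε ω ^ 2 + ((β₀ ^ 2 - 2 * β * β₀) * (ξ ω ^ 2 * u ω) + ((2 * β₀ - 2 * β) * (ξ ω * u ω * ε ω) + (ε ω ^ 2 * u ω + ((-(β * β₀)) * (ξ ω * u ω ^ 2)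 + (-β) * (ε ω * u ω ^ 2)))))) ∂μ := integral_add (J2) ((I3).add ((J4).add ((J5).add ((I6).add ((J7).add (J8))))))
    have A3 : ∫ ω, (ξ ω * ε ω ^ 2 + ((β₀ ^ 2 - 2 * β * β₀) * (ξ ω ^ 2 * u ω) + ((2 * β₀ - 2 * β) * (ξ ω * u ω * ε ω) + (ε ω ^ 2 * u ω + ((-(β * β₀)) * (ξ ω * u ω ^ 2) + (-β) * (ε ω * u ω ^ 2)))))) ∂μ = (∫ ω, ξ ω * ε ω ^ 2 ∂μ) + ∫ ω, ((β₀ ^ 2 - 2 * β * β₀) * (ξ ω ^ 2 * u ω) + ((2 * β₀ - 2 * β) * (ξ ω * u ω * ε ω) + (ε ω ^ 2 * u ω + ((-(β * β₀)) * (ξ ω * u ω ^ 2) + (-β) * (ε ω * u ω ^ 2))))) ∂μ := integral_add (I3) ((J4).add ((J5).add ((I6).add ((J7).add (J8)))))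
    have A4 : ∫ ω, ((β₀ ^ 2 - 2 * β * β₀) * (ξ ω ^ 2 * u ω) + ((2 * β₀ - 2 * β) * (ξ ω * u ω * ε ω) + (ε ω ^ 2 * u ω + ((-(β * β₀)) * (ξ ω * u ω ^ 2) + (-β) * (ε ω * u ω ^ 2))))) ∂μ = (∫ ω, (β₀ ^ 2 - 2 * β * β₀) * (ξ ω ^ 2 * u ω) ∂μ) + ∫ ω, ((2 * β₀ - 2 * β) * (ξ ω * u ω * ε ω) + (ε ω ^ 2 * u ω + ((-(β * β₀)) * (ξ ω * u ω ^ 2) + (-β) * (ε ω * u ω ^ 2)))) ∂μ := integral_add (J4) ((J5).add ((I6).add ((J7).add (J8))))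
    have A5 : ∫ ω, ((2 * β₀ - 2 * β) * (ξ ω * u ω * ε ω) + (ε ω ^ 2 * u ω + ((-(β * β₀)) * (ξ ω * u ω ^ 2) + (-β) * (ε ω * u ω ^ 2)))) ∂μ = (∫ ω, (2 * β₀ - 2 * β) * (ξ ω * u ω * ε ω) ∂μ) + ∫ ω, (ε ω ^ 2 * u ω + ((-(β * β₀)) * (ξ ω * u ω ^ 2) + (-β) * (ε ω * u ω ^ 2))) ∂μ := integral_add (J5) ((I6).add ((J7).add (J8)))
    have A6 : ∫ ω, (ε ω ^ 2 * u ω + ((-(β * β₀)) * (ξ ω * u ω ^ 2) + (-β) * (ε ω * u ω ^ 2))) ∂μ = (∫ ω, ε ω ^ 2 * u ω ∂μ) + ∫ ω, ((-(β * β₀)) * (ξ ω * u ω ^ 2) + (-β) * (ε ω * u ω ^ 2)) ∂μ := integral_add (I6) ((J7).add (J8))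
    have A7 : ∫ ω, ((-(β * β₀)) * (ξ ω * u ω ^ 2) + ((-β) * (ε ω * u ω ^ 2))) ∂μ = (∫ ω, (-(β * β₀)) * (ξ ω * u ω ^ 2) ∂μ) + ∫ ω, ((-β) * (ε ω * u ω ^ 2)) ∂μ := integral_add (J7) (J8)
    have A8 : ∫ ω, ((-β) * (ε ω * u ω ^ 2)) ∂μ = ∫ ω, (-β) * (ε ω * u ω ^ 2) ∂μ := rfl
    rw [A1, A2, A3, A4, A5, A6, A7]
    simp only [integral_const_mul]
    rw [E2, E3, E4, E5, E6, E7, E8, ← hA]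
    ring
  rw [key]
  constructor
  · intro h
    rcases mul_eq_zero.mp h with h' | h'
    · linarith
    · exact absurd h' hβξ
  · intro h; rw [h]; ring
end

section
/- For every constant C > 0 there exists a constant M > 0 (depending only on C) with the following property: for every δ ∈ (0, 1] and every pair of independent real-valued random variables V and W, each having a continuous (atomless) distribution, such that sup_{x∈ℝ} |P(V ≤ x) − Φ(x)| ≤ Cδ and sup_{x∈ℝ} |P(W ≤ x) − Φ(x)| ≤ Cδ, one has sup_{x∈ℝ} |P(V/W ≤ x) − F_c(x)| ≤ Mδ, where F_c is the standard Cauchy CDF. -/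
open MeasureTheory ProbabilityTheory Filter Real Topology
open Set


noncomputable def stdPhi (t : ℝ) : ℝ := ((gaussianReal 0 1) (Set.Iic t)).toReal
noncomputable def stdphi (t : ℝ) : ℝ := gaussianPDFReal 0 1 t

lemma gauss_singleton (a : ℝ) : gaussianReal 0 1 {a} = 0 := by
  rw [gaussianReal_apply_eq_integral _ one_ne_zero,
    Measure.restrict_eq_zero.mpr (volume_singleton), integral_zero_measure]
  simp

lemma stdPhi_eq_integral (t : ℝ) : stdPhi t = ∫ x in Set.Iic t, stdphi x := by
  rw [stdPhi, gaussianReal_apply_eq_integral _ one_ne_zero,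
    ENNReal.toReal_ofReal]
  · rfl
  · exact setIntegral_nonneg measurableSet_Iic fun x _ => gaussianPDFReal_nonneg _ _ _

lemma integrable_stdphi : Integrable stdphi := integrable_gaussianPDFReal 0 1

lemma continuous_stdphi : Continuous stdphi := by
  unfold stdphi gaussianPDFReal
  fun_prop

lemma hasDerivAt_stdPhi (t : ℝ) : HasDerivAt stdPhi (stdphi t) t := by
  have h0 : ∀ u : ℝ, stdPhi u = stdPhi 0 + ∫ s in (0:ℝ)..u, stdphi s := by
    intro u
    have := intervalIntegral.integral_Iic_sub_Iic (μ := volume) (f := stdphi) (a := (0:ℝ))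
      (b := u) integrable_stdphi.integrableOn integrable_stdphi.integrableOn
    rw [stdPhi_eq_integral, stdPhi_eq_integral]
    linarith [this]
  have h : HasDerivAt (fun u => stdPhi 0 + ∫ s in (0:ℝ)..u, stdphi s) (stdphi t) t := by
    refine HasDerivAt.const_add _ ?_
    exact intervalIntegral.integral_hasDerivAt_right integrable_stdphi.intervalIntegrable
      (integrable_stdphi.aestronglyMeasurable.stronglyMeasurableAtFilter)
      continuous_stdphi.continuousAt
  exact h.congr_of_eventuallyEq (Filter.Eventually.of_forall h0)

lemma continuous_stdPhi : Continuous stdPhi :=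
  continuous_iff_continuousAt.2 fun t => (hasDerivAt_stdPhi t).continuousAt

lemma stdPhi_nonneg (t : ℝ) : 0 ≤ stdPhi t := ENNReal.toReal_nonneg

lemma stdPhi_le_one (t : ℝ) : stdPhi t ≤ 1 := by
  rw [stdPhi]
  exact ENNReal.toReal_le_of_le_ofReal one_pos.le (by simpa using prob_le_one)

lemma stdphi_even (t : ℝ) : stdphi (-t) = stdphi t := by
  unfold stdphi gaussianPDFReal; norm_num [neg_sq]

lemma stdPhi_zero : stdPhi 0 = 1/2 := by
  have key : ∫ x in Set.Iic (0:ℝ), stdphi x = ∫ x in Set.Ioi (0:ℝ), stdphi x := by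
    have h := integral_comp_neg_Ioi (0:ℝ) stdphi
    simp only [neg_zero] at h
    rw [← h]
    exact setIntegral_congr_fun measurableSet_Ioi fun x _ => stdphi_even x
  have h1 : (∫ x in Set.Iic (0:ℝ), stdphi x) + ∫ x in Set.Ioi (0:ℝ), stdphi x = 1 := by
    rw [← setIntegral_union (by simp [Set.disjoint_left]) measurableSet_Ioi
      integrable_stdphi.integrableOn integrable_stdphi.integrableOn, Set.Iic_union_Ioi,
      setIntegral_univ]
    exact integral_gaussianPDFReal_eq_one 0 one_ne_zero
  rw [stdPhi_eq_integral]
  linarith [key, h1]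

section CDFHelpers
variable {κ : Measure ℝ} [IsProbabilityMeasure κ]

lemma meas_union_null {μ : Measure ℝ} {s t : Set ℝ} (h : μ t = 0) : μ (s ∪ t) = μ s :=
  le_antisymm ((measure_union_le s t).trans_eq (by rw [h, add_zero]))
    (measure_mono Set.subset_union_left)

lemma toReal_Ioi (t : ℝ) : (κ (Set.Ioi t)).toReal = 1 - (κ (Set.Iic t)).toReal := by
  rw [← Set.compl_Iic, measure_compl measurableSet_Iic (measure_ne_top κ _), measure_univ,
    ENNReal.toReal_sub_of_le prob_le_one ENNReal.one_ne_top, ENNReal.toReal_one]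

lemma meas_Ici_eq (h : κ {t} = 0) : κ (Set.Ici t) = κ (Set.Ioi t) := by
  rw [← Set.Ioi_union_left, meas_union_null h]

lemma meas_Iio_eq (h : κ {t} = 0) : κ (Set.Iio t) = κ (Set.Iic t) := by
  rw [← Set.Iio_union_right, meas_union_null h]

lemma toReal_Ici (h : κ {t} = 0) : (κ (Set.Ici t)).toReal = 1 - (κ (Set.Iic t)).toReal := by
  rw [meas_Ici_eq h, toReal_Ioi]

lemma toReal_union_Iic_Ici {b c : ℝ} (hbc : b ≤ c) (hc : κ {c} = 0) :
    (κ (Set.Iic b ∪ Set.Ici c)).toReal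
      = (κ (Set.Iic b)).toReal + (1 - (κ (Set.Iic c)).toReal) := by
  have h1 : Set.Iic b ∪ Set.Ici c = (Set.Iic b ∪ Set.Ioi c) ∪ {c} := by
    rw [Set.union_assoc, Set.Ioi_union_left]
  rw [h1, meas_union_null hc,
    measure_union (Set.Iic_disjoint_Ioi hbc) measurableSet_Ioi,
    ENNReal.toReal_add (measure_ne_top _ _) (measure_ne_top _ _), toReal_Ioi]

lemma toReal_Ioc_zero {a : ℝ} (h0a : 0 ≤ a) :
    (κ (Set.Ioc 0 a)).toReal = (κ (Set.Iic a)).toReal - (κ (Set.Iic 0)).toReal := by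
  have h := measure_union (μ := κ) (s₁ := Set.Iic 0) (s₂ := Set.Ioc 0 a)
    (Set.Iic_disjoint_Ioc (le_refl (0:ℝ))) measurableSet_Ioc
  rw [Set.Iic_union_Ioc_eq_Iic h0a] at h
  have := ENNReal.toReal_add (a := κ (Set.Iic 0)) (b := κ (Set.Ioc 0 a))
    (measure_ne_top _ _) (measure_ne_top _ _)
  rw [← h] at this
  linarith [this]

lemma toReal_Ico_zero {a : ℝ} (ha0 : a ≤ 0) (ha : κ {a} = 0) (h0 : κ {(0:ℝ)} = 0) :
    (κ (Set.Ico a 0)).toReal = (κ (Set.Iic 0)).toReal - (κ (Set.Iic a)).toReal := by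
  have h := measure_union (μ := κ) (s₁ := Set.Iio a) (s₂ := Set.Ico a 0)
    (by rw [Set.disjoint_left]; intro w hw hw2; exact absurd hw2.1 (not_le.mpr hw))
    measurableSet_Ico
  rw [Set.Iio_union_Ico_eq_Iio ha0] at h
  rw [meas_Iio_eq h0, meas_Iio_eq ha] at h
  have := ENNReal.toReal_add (a := κ (Set.Iic a)) (b := κ (Set.Ico a 0))
    (measure_ne_top _ _) (measure_ne_top _ _)
  rw [← h] at this
  linarith [this]

end CDFHelpers

lemma slice_v_pos {w x : ℝ} (hw : 0 < w) : {v : ℝ | v / w ≤ x} = Set.Iic (x*w) := by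
  ext v; simp [Set.mem_Iic, div_le_iff₀ hw, mul_comm]

lemma slice_v_neg {w x : ℝ} (hw : w < 0) : {v : ℝ | v / w ≤ x} = Set.Ici (x*w) := by
  ext v; simp [Set.mem_Ici, div_le_iff_of_neg hw]

lemma sw_pos {v x : ℝ} (hx : 0 < x) :
    {w : ℝ | v / w ≤ x} = Set.Iic (min (v/x) 0) ∪ Set.Ici (max (v/x) 0) := by
  ext w
  simp only [Set.mem_setOf_eq, Set.mem_union, Set.mem_Iic, Set.mem_Ici, le_min_iff, max_le_iff]
  rcases lt_trichotomy w 0 with hw | hw | hw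
  · rw [div_le_iff_of_neg hw]
    constructor
    · intro h
      left
      refine ⟨?_, hw.le⟩
      rw [le_div_iff₀ hx]
      linarith [h]
    · rintro (⟨h1, _⟩ | ⟨_, h2⟩)
      · rw [le_div_iff₀ hx] at h1; linarith
      · linarith
  · subst hw
    simp only [div_zero]
    constructor
    · intro _
      rcases le_or_gt (v/x) 0 with h | h
      · right; exact ⟨h, le_refl 0⟩
      · left; exact ⟨by linarith, le_refl 0⟩
    · intro _; exact hx.le
  · rw [div_le_iff₀ hw]
    constructor
    · intro h
      right
      refine ⟨?_, hw.le⟩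
      rw [div_le_iff₀ hx]
      linarith
    · rintro (⟨_, h2⟩ | ⟨h1, _⟩)
      · linarith
      · rw [div_le_iff₀ hx] at h1; linarith

lemma sw_neg {v x : ℝ} (hx : x < 0) :
    {w : ℝ | v / w ≤ x} = Set.Ioc 0 (v/x) ∪ Set.Ico (v/x) 0 := by
  ext w
  simp only [Set.mem_setOf_eq, Set.mem_union, Set.mem_Ioc, Set.mem_Ico]
  rcases lt_trichotomy w 0 with hw | hw | hw
  · rw [div_le_iff_of_neg hw]
    constructor
    · intro h
      right
      refine ⟨?_, hw⟩
      rw [div_le_iff_of_neg hx]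
      linarith
    · rintro (⟨h1, _⟩ | ⟨h1, _⟩)
      · linarith
      · rw [div_le_iff_of_neg hx] at h1; linarith
  · subst hw
    simp only [div_zero]
    constructor
    · intro h; linarith
    · rintro (⟨h1, _⟩ | ⟨_, h2⟩) <;> linarith
  · rw [div_le_iff₀ hw]
    constructor
    · intro h
      left
      refine ⟨hw, ?_⟩
      rw [le_div_iff_of_neg hx]
      linarith
    · rintro (⟨_, h2⟩ | ⟨_, h2⟩)
      · rw [le_div_iff_of_neg hx] at h2; linarith
      · linarith

lemma sw_zero_neg {v : ℝ} (hv : v < 0) : {w : ℝ | v / w ≤ 0} = Set.Ici 0 := by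
  ext w
  simp only [Set.mem_setOf_eq, Set.mem_Ici, div_nonpos_iff]
  constructor
  · rintro (⟨h1, _⟩ | ⟨_, h2⟩) <;> linarith
  · intro h; right; exact ⟨hv.le, h⟩

lemma sw_zero_pos {v : ℝ} (hv : 0 < v) : {w : ℝ | v / w ≤ 0} = Set.Iic 0 := by
  ext w
  simp only [Set.mem_setOf_eq, Set.mem_Iic, div_nonpos_iff]
  constructor
  · rintro (⟨_, h2⟩ | ⟨h1, _⟩) <;> linarith
  · intro h; left; exact ⟨hv.le, h⟩

lemma sw_zero_zero : {w : ℝ | (0:ℝ) / w ≤ 0} = Set.univ := by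
  ext w; simp [zero_div]

lemma slice_v_zero {x : ℝ} : {v : ℝ | v / 0 ≤ x} = if 0 ≤ x then Set.univ else (∅ : Set ℝ) := by
  ext v; simp only [div_zero]
  split <;> simp_all

section Bounds
variable {κ₁ κ₂ : Measure ℝ} [IsProbabilityMeasure κ₁] [IsProbabilityMeasure κ₂]

lemma sectionV_bound (h1 : ∀ c : ℝ, κ₁ {c} = 0) (h2 : ∀ c : ℝ, κ₂ {c} = 0) {ε : ℝ} (hε : 0 ≤ ε)
    (hF : ∀ t : ℝ, |(κ₁ (Set.Iic t)).toReal - (κ₂ (Set.Iic t)).toReal| ≤ ε) (w x : ℝ) :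
    |(κ₁ {v : ℝ | v / w ≤ x}).toReal - (κ₂ {v : ℝ | v / w ≤ x}).toReal| ≤ ε := by
  rcases lt_trichotomy w 0 with hw | hw | hw
  · rw [slice_v_neg hw, toReal_Ici (h1 _), toReal_Ici (h2 _)]
    have := hF (x*w)
    rw [abs_le] at *
    constructor <;> linarith [this.1, this.2]
  · subst hw
    rw [slice_v_zero]
    split <;> simp [hε]
  · rw [slice_v_pos hw]
    exact hF (x*w)

lemma sectionW_bound (h1 : ∀ c : ℝ, κ₁ {c} = 0) (h2 : ∀ c : ℝ, κ₂ {c} = 0) {ε : ℝ} (hε : 0 ≤ ε)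
    (hF : ∀ t : ℝ, |(κ₁ (Set.Iic t)).toReal - (κ₂ (Set.Iic t)).toReal| ≤ ε) (v x : ℝ) :
    |(κ₁ {w : ℝ | v / w ≤ x}).toReal - (κ₂ {w : ℝ | v / w ≤ x}).toReal| ≤ 2*ε := by
  rcases lt_trichotomy x 0 with hx | hx | hx
  · rw [sw_neg hx]
    rcases le_or_gt (v/x) 0 with ha | ha
    · rw [Set.Ioc_eq_empty (by simpa using ha), Set.empty_union,
        toReal_Ico_zero ha (h1 _) (h1 _), toReal_Ico_zero ha (h2 _) (h2 _)]
      have e1 := hF (v/x); have e2 := hF 0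
      rw [abs_le] at *
      constructor <;> linarith [e1.1, e1.2, e2.1, e2.2]
    · rw [Set.Ico_eq_empty (by simpa using ha.le), Set.union_empty,
        toReal_Ioc_zero ha.le, toReal_Ioc_zero ha.le]
      have e1 := hF (v/x); have e2 := hF 0
      rw [abs_le] at *
      constructor <;> linarith [e1.1, e1.2, e2.1, e2.2]
  · subst hx
    rcases lt_trichotomy v 0 with hv | hv | hv
    · rw [sw_zero_neg hv, toReal_Ici (h1 _), toReal_Ici (h2 _)]
      have e2 := hF 0
      rw [abs_le] at *
      constructor <;> linarith [e2.1, e2.2]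
    · subst hv
      rw [sw_zero_zero]
      simp [measure_univ]
      linarith
    · rw [sw_zero_pos hv]
      have e2 := hF 0
      rw [abs_le] at *
      constructor <;> linarith [e2.1, e2.2]
  · rw [sw_pos hx]
    have hbc : min (v/x) 0 ≤ max (v/x) 0 := le_trans (min_le_right _ _) (le_max_right _ _)
    rw [toReal_union_Iic_Ici hbc (h1 _), toReal_union_Iic_Ici hbc (h2 _)]
    have e1 := hF (min (v/x) 0); have e2 := hF (max (v/x) 0)
    rw [abs_le] at *
    constructor <;> linarith [e1.1, e1.2, e2.1, e2.2]

end Bounds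

lemma lint_compare {α : Type} [MeasurableSpace α] (ρ : Measure α) [IsProbabilityMeasure ρ]
    {f g : α → ENNReal} {ε : ℝ} (hε : 0 ≤ ε) (hf1 : ∀ a, f a ≤ 1) (hg1 : ∀ a, g a ≤ 1)
    (h : ∀ a, |(f a).toReal - (g a).toReal| ≤ ε) :
    |(∫⁻ a, f a ∂ρ).toReal - (∫⁻ a, g a ∂ρ).toReal| ≤ ε := by
  have key : ∀ (f g : α → ENNReal), (∀ a, f a ≤ 1) → (∀ a, g a ≤ 1) →
      (∀ a, (f a).toReal - (g a).toReal ≤ ε) →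
      (∫⁻ a, f a ∂ρ).toReal - (∫⁻ a, g a ∂ρ).toReal ≤ ε := by
    intro f g hf1 hg1 h
    have hpt : ∀ a, f a ≤ g a + ENNReal.ofReal ε := by
      intro a
      have hft : f a ≠ ⊤ := ne_top_of_le_ne_top ENNReal.one_ne_top (hf1 a)
      have hgt : g a ≠ ⊤ := ne_top_of_le_ne_top ENNReal.one_ne_top (hg1 a)
      calc f a = ENNReal.ofReal (f a).toReal := (ENNReal.ofReal_toReal hft).symm
        _ ≤ ENNReal.ofReal ((g a).toReal + ε) := ENNReal.ofReal_le_ofReal (by linarith [h a])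
        _ = ENNReal.ofReal (g a).toReal + ENNReal.ofReal ε :=
            ENNReal.ofReal_add ENNReal.toReal_nonneg hε
        _ = g a + ENNReal.ofReal ε := by rw [ENNReal.ofReal_toReal hgt]
    have hle : ∫⁻ a, f a ∂ρ ≤ (∫⁻ a, g a ∂ρ) + ENNReal.ofReal ε := by
      calc ∫⁻ a, f a ∂ρ ≤ ∫⁻ a, (g a + ENNReal.ofReal ε) ∂ρ := lintegral_mono hpt
        _ = (∫⁻ a, g a ∂ρ) + ENNReal.ofReal ε := by
            rw [lintegral_add_right _ measurable_const, lintegral_const, measure_univ, mul_one]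
    have hgle : ∫⁻ a, g a ∂ρ ≤ 1 := by
      calc ∫⁻ a, g a ∂ρ ≤ ∫⁻ _, 1 ∂ρ := lintegral_mono hg1
        _ = 1 := by rw [lintegral_const, measure_univ, mul_one]
    have hgt : ∫⁻ a, g a ∂ρ ≠ ⊤ := ne_top_of_le_ne_top ENNReal.one_ne_top hgle
    have := ENNReal.toReal_mono (by finiteness) hle
    rw [ENNReal.toReal_add hgt ENNReal.ofReal_ne_top, ENNReal.toReal_ofReal hε] at this
    linarith
  rw [abs_le]
  constructor
  · have := key g f hg1 hf1 (fun a => by linarith [abs_le.mp (h a)])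
    linarith
  · exact key f g hf1 hg1 (fun a => (abs_le.mp (h a)).2)

lemma int_Ioi {b : ℝ} (hb : 0 < b) :
    ∫ w in Set.Ioi (0:ℝ), w * rexp (-b*w^2) = (2*b)⁻¹ := by
  have hderiv : ∀ w ∈ Set.Ioi (0:ℝ),
      HasDerivAt (fun w : ℝ => -(2*b)⁻¹ * rexp (-b*w^2)) (w * rexp (-b*w^2)) w := by
    intro w _
    have h1 : HasDerivAt (fun w : ℝ => -b*w^2) (-b*(2*w)) w := by
      simpa using (hasDerivAt_pow 2 w).const_mul (-b)
    have h2 := (Real.hasDerivAt_exp (-b*w^2)).comp w h1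
    have h3 := h2.const_mul (-(2*b)⁻¹)
    refine h3.congr_deriv ?_
    field_simp
  have htend : Tendsto (fun w : ℝ => -(2*b)⁻¹ * rexp (-b*w^2)) atTop (𝓝 0) := by
    have h1 : Tendsto (fun w : ℝ => b * w^2) atTop atTop :=
      (tendsto_pow_atTop two_ne_zero).const_mul_atTop hb
    have h2 : Tendsto (fun w : ℝ => rexp (-(b*w^2))) atTop (𝓝 0) :=
      tendsto_exp_neg_atTop_nhds_zero.comp h1
    have h3 := h2.const_mul (-(2*b)⁻¹)
    rw [mul_zero] at h3
    convert h3 using 2 with w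
    ring_nf
  have := integral_Ioi_of_hasDerivAt_of_tendsto
    (by fun_prop : Continuous fun w : ℝ => -(2*b)⁻¹ * rexp (-b*w^2)).continuousWithinAt
    hderiv (integrable_mul_exp_neg_mul_sq hb).integrableOn htend
  rw [this]
  norm_num

lemma int_abs {b : ℝ} (hb : 0 < b) : ∫ w : ℝ, |w| * rexp (-b*w^2) = b⁻¹ := by
  have h1 : ∫ w : ℝ, |w| * rexp (-b*w^2)
      = ∫ w : ℝ, (fun u : ℝ => u * rexp (-b*u^2)) |w| := by
    congr 1 with w
    simp [sq_abs]
  rw [h1, integral_comp_abs (f := fun u : ℝ => u * rexp (-b*u^2)), int_Ioi hb]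
  rw [mul_inv]
  field_simp

lemma stdphi_nonneg (t : ℝ) : 0 ≤ stdphi t := gaussianPDFReal_nonneg _ _ _

lemma stdphi_le_one (t : ℝ) : stdphi t ≤ 1 := by
  unfold stdphi gaussianPDFReal
  have h1 : (√(2 * π * 1))⁻¹ ≤ 1 := by
    rw [inv_le_one_iff₀]
    right
    rw [Real.one_le_sqrt]
    nlinarith [Real.pi_gt_three]
  have h2 : rexp (-(t - 0)^2 / (2*1)) ≤ 1 := by
    rw [Real.exp_le_one_iff]
    nlinarith [sq_nonneg (t - 0)]
  push_cast
  nlinarith [Real.sqrt_nonneg (2*π*1), inv_nonneg.mpr (Real.sqrt_nonneg (2*π*1)),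
    Real.exp_pos (-(t-0)^2/(2*1))]

lemma integral_gauss_eq (g : ℝ → ℝ) :
    ∫ w, g w ∂(gaussianReal 0 1) = ∫ w, stdphi w * g w := by
  rw [gaussianReal_of_var_ne_zero _ one_ne_zero]
  have hm : Measurable fun x : ℝ => (stdphi x).toNNReal := by
    unfold stdphi gaussianPDFReal
    fun_prop
  have h := integral_withDensity_eq_integral_smul (μ := volume) hm g
  have hd : (volume.withDensity (gaussianPDF 0 1))
      = volume.withDensity fun x => ((stdphi x).toNNReal : ENNReal) := rfl
  rw [hd, h]
  congr 1 with w
  rw [NNReal.smul_def, Real.coe_toNNReal _ (stdphi_nonneg w), smul_eq_mul]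

lemma integrable_abs_gauss : Integrable (fun w : ℝ => |w|) (gaussianReal 0 1) := by
  rw [gaussianReal_of_var_ne_zero _ one_ne_zero,
    integrable_withDensity_iff (measurable_gaussianPDF _ _)
      (ae_of_all _ fun x => ENNReal.ofReal_lt_top)]
  have hi : Integrable (fun w : ℝ => (√(2*π*1))⁻¹ * |w * rexp (-(1/2) * w^2)|) :=
    ((integrable_mul_exp_neg_mul_sq (by norm_num : (0:ℝ) < 1/2)).abs).const_mul _
  refine hi.congr (ae_of_all _ fun w => ?_)
  show (√(2*π*1))⁻¹ * |w * rexp (-(1/2) * w^2)| = |w| * (gaussianPDF 0 1 w).toReal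
  rw [abs_mul, abs_of_pos (Real.exp_pos _)]
  rw [gaussianPDF, ENNReal.toReal_ofReal (gaussianPDFReal_nonneg _ _ _)]
  unfold gaussianPDFReal
  push_cast
  rw [show -(w - 0)^2 / (2*1) = -(1/2) * w^2 by ring]
  ring

lemma J_eq (x : ℝ) :
    (((gaussianReal 0 1).prod (gaussianReal 0 1)) {p : ℝ × ℝ | p.1/p.2 ≤ x}).toReal
    = ∫ w, (if 0 < w then stdPhi (x*w) else 1 - stdPhi (x*w)) ∂(gaussianReal 0 1) := by
  have hT : MeasurableSet {p : ℝ × ℝ | p.1/p.2 ≤ x} :=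
    measurableSet_le (measurable_fst.div measurable_snd) measurable_const
  rw [Measure.prod_apply_symm hT]
  rw [← integral_toReal ((measurable_measure_prodMk_right hT).aemeasurable)
    (ae_of_all _ fun w => measure_lt_top _ _)]
  refine integral_congr_ae ?_
  have h0 : ∀ᵐ w : ℝ ∂(gaussianReal 0 1), w ≠ 0 := by
    rw [ae_iff]; simpa using gauss_singleton 0
  filter_upwards [h0] with w hw
  have hpre : ((fun v => (v, w)) ⁻¹' {p : ℝ × ℝ | p.1/p.2 ≤ x}) = {v : ℝ | v / w ≤ x} := rfl
  rcases hw.lt_or_gt with hneg | hpos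
  · rw [hpre, slice_v_neg hneg, if_neg (not_lt.mpr hneg.le), toReal_Ici (gauss_singleton _)]
    rfl
  · rw [hpre, slice_v_pos hpos, if_pos hpos]
    rfl

lemma hasDerivAt_J (x₀ : ℝ) :
    HasDerivAt
      (fun x => ∫ w, (if 0 < w then stdPhi (x*w) else 1 - stdPhi (x*w)) ∂(gaussianReal 0 1))
      (1/(π*(1+x₀^2))) x₀ := by
  have hmF : ∀ x : ℝ, AEStronglyMeasurable
      (fun w : ℝ => if 0 < w then stdPhi (x*w) else 1 - stdPhi (x*w)) (gaussianReal 0 1) := by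
    intro x
    apply Measurable.aestronglyMeasurable
    exact Measurable.ite (measurableSet_lt measurable_const measurable_id)
      (continuous_stdPhi.comp (continuous_const.mul continuous_id)).measurable
      (continuous_const.sub (continuous_stdPhi.comp (continuous_const.mul continuous_id))).measurable
  have hInt : Integrable
      (fun w : ℝ => if 0 < w then stdPhi (x₀*w) else 1 - stdPhi (x₀*w)) (gaussianReal 0 1) := by
    refine (integrable_const (1:ℝ)).mono' (hmF x₀) (ae_of_all _ fun w => ?_)
    rw [Real.norm_eq_abs, abs_le]
    split
    · constructor <;> linarith [stdPhi_nonneg (x₀*w), stdPhi_le_one (x₀*w)]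
    · constructor <;> linarith [stdPhi_nonneg (x₀*w), stdPhi_le_one (x₀*w)]
  have hmF' : AEStronglyMeasurable (fun w : ℝ => |w| * stdphi (x₀*w)) (gaussianReal 0 1) :=
    (continuous_abs.mul (continuous_stdphi.comp (continuous_const.mul continuous_id))).aestronglyMeasurable
  have hbound : ∀ᵐ w ∂(gaussianReal 0 1), ∀ x ∈ Metric.ball x₀ 1,
      ‖|w| * stdphi (x*w)‖ ≤ |w| := by
    refine ae_of_all _ fun w x _ => ?_
    rw [Real.norm_eq_abs, abs_mul, abs_abs, abs_of_nonneg (stdphi_nonneg _)]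
    nlinarith [stdphi_le_one (x*w), abs_nonneg w, stdphi_nonneg (x*w)]
  have hdiff : ∀ᵐ w ∂(gaussianReal 0 1), ∀ x ∈ Metric.ball x₀ 1,
      HasDerivAt (fun x => if 0 < w then stdPhi (x*w) else 1 - stdPhi (x*w))
        (|w| * stdphi (x*w)) x := by
    refine ae_of_all _ fun w x _ => ?_
    by_cases hw : 0 < w
    · simp only [if_pos hw]
      have h := (hasDerivAt_stdPhi (x*w)).comp x (hasDerivAt_mul_const w)
      have : (stdPhi ∘ fun x => x * w) = fun x => stdPhi (x*w) := rfl
      rw [this] at h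
      refine h.congr_deriv ?_
      rw [abs_of_pos hw]
      unfold stdphi
      ring
    · simp only [if_neg hw]
      have h := ((hasDerivAt_stdPhi (x*w)).comp x (hasDerivAt_mul_const w)).const_sub 1
      have h2 : ((fun y => stdPhi y) ∘ fun x => x * w) = fun x => stdPhi (x*w) := rfl
      simp only [Function.comp] at h
      refine h.congr_deriv ?_
      rw [abs_of_nonpos (not_lt.mp hw)]
      unfold stdphi
      ring
  have key := hasDerivAt_integral_of_dominated_loc_of_deriv_le (Metric.ball_mem_nhds x₀ one_pos)
    (Filter.Eventually.of_forall fun x => hmF x) hInt hmF' hbound integrable_abs_gauss hdiff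
  have hval : ∫ w, |w| * stdphi (x₀*w) ∂(gaussianReal 0 1) = 1/(π*(1+x₀^2)) := by
    rw [integral_gauss_eq]
    have hs : (√(2*π*1))⁻¹ * (√(2*π*1))⁻¹ = (2*π)⁻¹ := by
      rw [← mul_inv, Real.mul_self_sqrt (by positivity)]
      norm_num
    have hfun : (fun w : ℝ => stdphi w * (|w| * stdphi (x₀*w)))
        = fun w : ℝ => (2*π)⁻¹ * (|w| * rexp (-((1+x₀^2)/2) * w^2)) := by
      funext w
      have he : rexp (-(w-0)^2/(2*1)) * rexp (-(x₀*w-0)^2/(2*1))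
          = rexp (-((1+x₀^2)/2) * w^2) := by
        rw [← Real.exp_add]; congr 1; ring
      unfold stdphi gaussianPDFReal
      push_cast
      rw [← hs, ← he]
      ring
    rw [hfun, MeasureTheory.integral_const_mul, int_abs (by positivity)]
    have h1 : (0:ℝ) < 1 + x₀^2 := by positivity
    field_simp
  rw [← hval]
  exact key.2

lemma cauchy_prod (x : ℝ) :
    (((gaussianReal 0 1).prod (gaussianReal 0 1)) {p : ℝ × ℝ | p.1/p.2 ≤ x}).toReal
      = 1/2 + Real.arctan x / π := by
  set K : ℝ → ℝ :=
    fun x => ∫ w, (if 0 < w then stdPhi (x*w) else 1 - stdPhi (x*w)) ∂(gaussianReal 0 1) with hK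
  have hG : ∀ y : ℝ, HasDerivAt (fun t => 1/2 + Real.arctan t / π) (1/(π*(1+y^2))) y := by
    intro y
    have h := HasDerivAt.const_add (1/2) ((Real.hasDerivAt_arctan y).div_const π)
    refine h.congr_deriv ?_
    rw [div_div]
    rw [one_div, one_div, mul_comm]
  have hdiff : ∀ y : ℝ, HasDerivAt (fun t => K t - (1/2 + Real.arctan t / π)) 0 y := by
    intro y
    exact ((hasDerivAt_J y).sub (hG y)).congr_deriv (sub_self _)
  have hconst := is_const_of_deriv_eq_zero
    (fun y => (hdiff y).differentiableAt) (fun y => (hdiff y).deriv) x 0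
  have hK0 : K 0 = 1/2 := by
    have hfun : (fun w : ℝ => if 0 < w then stdPhi (0*w) else 1 - stdPhi (0*w))
        = fun _ : ℝ => (1:ℝ)/2 := by
      funext w
      rw [zero_mul, stdPhi_zero]
      split <;> norm_num
    rw [hK]
    simp only []
    rw [hfun, integral_const]
    simp
  simp only [Real.arctan_zero, zero_div, add_zero] at hconst
  rw [hK0] at hconst
  rw [J_eq x]
  show K x = 1/2 + Real.arctan x / π
  linarith [hconst]

/-- For every C > 0 there is an M > 0 (depending only on C) such that:
for all δ ∈ (0,1] and all independent real random variables V, W with atomless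
distributions whose CDFs are uniformly within Cδ of the standard normal CDF Φ,
the CDF of V/W is uniformly within Mδ of the standard Cauchy CDF
F_c(x) = 1/2 + arctan(x)/π. -/
theorem ratio_near_normal_is_near_cauchy :
    ∀ C : ℝ, 0 < C → ∃ M : ℝ, 0 < M ∧
      ∀ (δ : ℝ), 0 < δ → δ ≤ 1 →
      ∀ (Ω : Type) [MeasurableSpace Ω] (μ : Measure Ω) [IsProbabilityMeasure μ]
        (V W : Ω → ℝ), Measurable V → Measurable W → IndepFun V W μ →
        (∀ c : ℝ, μ {ω | V ω = c} = 0) →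
        (∀ c : ℝ, μ {ω | W ω = c} = 0) →
        (∀ x : ℝ, |(μ {ω | V ω ≤ x}).toReal
          - ((gaussianReal 0 1) (Set.Iic x)).toReal| ≤ C * δ) →
        (∀ x : ℝ, |(μ {ω | W ω ≤ x}).toReal
          - ((gaussianReal 0 1) (Set.Iic x)).toReal| ≤ C * δ) →
        ∀ x : ℝ, |(μ {ω | V ω / W ω ≤ x}).toReal
          - (1 / 2 + Real.arctan x / π)| ≤ M * δ := by
  intro C hC
  refine ⟨3*C, by positivity, ?_⟩
  intro δ hδ hδ1 Ω mΩ μ hμ V W hV hW hVW hAV hAW hFV hFW x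
  have hCδ : 0 ≤ C * δ := by positivity
  set ν := μ.map V with hν
  set ρ := μ.map W with hρ
  set γ := gaussianReal 0 1 with hγ
  haveI : IsProbabilityMeasure ν := Measure.isProbabilityMeasure_map hV.aemeasurable
  haveI : IsProbabilityMeasure ρ := Measure.isProbabilityMeasure_map hW.aemeasurable
  have hT : MeasurableSet {p : ℝ × ℝ | p.1/p.2 ≤ x} :=
    measurableSet_le (measurable_fst.div measurable_snd) measurable_const
  -- the distribution identity
  have h0 : μ {ω | V ω / W ω ≤ x} = (ν.prod ρ) {p : ℝ × ℝ | p.1/p.2 ≤ x} := by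
    rw [hν, hρ, ← (indepFun_iff_map_prod_eq_prod_map_map hV.aemeasurable hW.aemeasurable).mp hVW,
      Measure.map_apply (hV.prodMk hW) hT]
    rfl
  -- CDF facts
  have hνatom : ∀ c : ℝ, ν {c} = 0 := by
    intro c
    rw [hν, Measure.map_apply hV (measurableSet_singleton c)]
    exact hAV c
  have hρatom : ∀ c : ℝ, ρ {c} = 0 := by
    intro c
    rw [hρ, Measure.map_apply hW (measurableSet_singleton c)]
    exact hAW c
  have hFν : ∀ t : ℝ, |(ν (Set.Iic t)).toReal - (γ (Set.Iic t)).toReal| ≤ C * δ := by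
    intro t
    rw [hν, Measure.map_apply hV measurableSet_Iic]
    exact hFV t
  have hFρ : ∀ t : ℝ, |(ρ (Set.Iic t)).toReal - (γ (Set.Iic t)).toReal| ≤ C * δ := by
    intro t
    rw [hρ, Measure.map_apply hW measurableSet_Iic]
    exact hFW t
  have hγ0 : ∀ t : ℝ, |(γ (Set.Iic t)).toReal - (γ (Set.Iic t)).toReal| ≤ (0:ℝ) := by
    intro t; simp
  -- Step A
  have stepA : |((ν.prod ρ) {p : ℝ × ℝ | p.1/p.2 ≤ x}).toReal
      - ((γ.prod ρ) {p : ℝ × ℝ | p.1/p.2 ≤ x}).toReal| ≤ C * δ := by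
    rw [Measure.prod_apply_symm hT, Measure.prod_apply_symm hT]
    exact lint_compare ρ hCδ (fun w => prob_le_one) (fun w => prob_le_one)
      (fun w => sectionV_bound hνatom gauss_singleton hCδ hFν w x)
  -- Step B
  have stepB : |((γ.prod ρ) {p : ℝ × ℝ | p.1/p.2 ≤ x}).toReal
      - ((γ.prod γ) {p : ℝ × ℝ | p.1/p.2 ≤ x}).toReal| ≤ 2*(C * δ) := by
    rw [Measure.prod_apply hT, Measure.prod_apply hT]
    exact lint_compare γ (by linarith) (fun v => prob_le_one) (fun v => prob_le_one)
      (fun v => sectionW_bound hρatom gauss_singleton hCδ hFρ v x)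
  have hcauchy : ((γ.prod γ) {p : ℝ × ℝ | p.1/p.2 ≤ x}).toReal
      = 1/2 + Real.arctan x / π := cauchy_prod x
  rw [h0, ← hcauchy]
  calc |((ν.prod ρ) {p : ℝ × ℝ | p.1/p.2 ≤ x}).toReal
        - ((γ.prod γ) {p : ℝ × ℝ | p.1/p.2 ≤ x}).toReal|
      ≤ |((ν.prod ρ) {p : ℝ × ℝ | p.1/p.2 ≤ x}).toReal
          - ((γ.prod ρ) {p : ℝ × ℝ | p.1/p.2 ≤ x}).toReal|
        + |((γ.prod ρ) {p : ℝ × ℝ | p.1/p.2 ≤ x}).toReal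
          - ((γ.prod γ) {p : ℝ × ℝ | p.1/p.2 ≤ x}).toReal| := abs_sub_le _ _ _
    _ ≤ C * δ + 2*(C*δ) := add_le_add stepA stepB
    _ = 3*C*δ := by ring
end

section
/- (Median CLT for triangular arrays with perturbed distributions.) Let G : ℝ → [0,1] be a CDF with G(0) = 1/2 that is differentiable at 0 with derivative g = G′(0) > 0. Let b ↦ B(b) be odd positive integers with B(b) → ∞ and B(b)/b → 0 as b → ∞, and let M > 0. For each b, let X_{1,b}, …, X_{B(b),b} be i.i.d. real random variables whose common CDF F_b satisfies sup_{x∈ℝ} |F_b(x) − G(x)| ≤ M/√b. Then √(B(b)) · median(X_{1,b}, …, X_{B(b),b}) converges in distribution, as b → ∞, to the centered normal distribution N(0, 1/(4g²)). -/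
open MeasureTheory ProbabilityTheory Filter Real Topology

open scoped ENNReal NNReal

/-- The median of a tuple of `B` real numbers: its `((B+1)/2)`-th smallest value
(1-indexed), obtained by sorting the values in nondecreasing order. -/
noncomputable def medianFin {B : ℕ} (v : Fin B → ℝ) : ℝ :=
  (Multiset.sort (Multiset.map v Finset.univ.val) (· ≤ ·)).getD ((B + 1) / 2 - 1) 0

lemma sorted_count_le {l : List ℝ} (hl : l.Pairwise (· ≤ ·)) {i : ℕ} (hi : i < l.length) (c : ℝ) :
    l.getD i 0 ≤ c ↔ i + 1 ≤ l.countP (fun x => decide (x ≤ c)) := by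
  rw [List.getD_eq_getElem l 0 hi]
  constructor
  · intro h
    have h2 : (l.take (i+1)).countP (fun x => decide (x ≤ c)) = i + 1 := by
      have hall : ∀ x ∈ l.take (i+1), (fun x => decide (x ≤ c)) x = true := by
        intro x hx
        obtain ⟨j, hj, rfl⟩ := List.mem_iff_getElem.1 hx
        have hjl : j ≤ i := by simp [List.length_take] at hj; omega
        rw [List.getElem_take]
        simp only [decide_eq_true_eq]
        refine le_trans ?_ h
        exact hl.rel_get_of_le (show (⟨j, by omega⟩ : Fin l.length) ≤ ⟨i, hi⟩ from hjl)
      rw [List.countP_eq_length.2 hall, List.length_take]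
      omega
    calc i + 1 = (l.take (i+1)).countP (fun x => decide (x ≤ c)) := h2.symm
      _ ≤ _ := by
          conv_rhs => rw [← List.take_append_drop (i+1) l]
          rw [List.countP_append]; omega
  · intro h
    by_contra hc
    push_neg at hc
    have h0 : (l.drop i).countP (fun x => decide (x ≤ c)) = 0 := by
      rw [List.countP_eq_zero]
      intro x hx
      obtain ⟨j, hj, rfl⟩ := List.mem_iff_getElem.1 hx
      have hjl : i + j < l.length := by simp [List.length_drop] at hj; omega
      rw [List.getElem_drop]
      simp only [decide_eq_true_eq, not_le]
      refine lt_of_lt_of_le hc ?_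
      exact hl.rel_get_of_le (show (⟨i, hi⟩ : Fin l.length) ≤ ⟨i + j, hjl⟩ from by simp)
    have h1 : l.countP (fun x => decide (x ≤ c)) ≤ i := by
      conv_lhs => rw [← List.take_append_drop i l]
      rw [List.countP_append, h0, Nat.add_zero]
      calc (l.take i).countP _ ≤ (l.take i).length := List.countP_le_length
        _ ≤ i := by simp [List.length_take]
    omega

lemma medianFin_le_iff {B : ℕ} (hB : Odd B) (v : Fin B → ℝ) (c : ℝ) :
    medianFin v ≤ c ↔ (B + 1) / 2 ≤ (Finset.univ.filter (fun j => v j ≤ c)).card := by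
  obtain ⟨k, rfl⟩ := hB
  set l := Multiset.sort (Multiset.map v Finset.univ.val) (· ≤ ·) with hldef
  have hlen : l.length = 2 * k + 1 := by simp [hldef]
  have hsorted : l.Pairwise (· ≤ ·) := Multiset.pairwise_sort _ _
  have hm : (2 * k + 1 + 1) / 2 - 1 = k := by omega
  have hcount : l.countP (fun x => decide (x ≤ c)) =
      (Finset.univ.filter (fun j => v j ≤ c)).card := by
    have hcoe : (l : Multiset ℝ) = Multiset.map v Finset.univ.val := Multiset.sort_eq _ _
    have h1 : l.countP (fun x => decide (x ≤ c))
        = (Multiset.map v Finset.univ.val).countP (fun x => decide (x ≤ c)) := by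
      rw [← hcoe]; simp [Multiset.coe_countP]
    rw [h1, Multiset.countP_map]
    simp [Finset.filter, Finset.card, Multiset.countP_eq_card_filter]
  rw [medianFin, hm, ← hldef, sorted_count_le hsorted (by omega : k < l.length), hcount]
  omega

lemma binom_count {Ω : Type*} [MeasurableSpace Ω] (μ : Measure Ω) [IsProbabilityMeasure μ]
    {B : ℕ} (X : Fin B → Ω → ℝ) (hmeas : ∀ j, Measurable (X j))
    (hind : iIndepFun X μ)
    (hid : ∀ j j', IdentDistrib (X j) (X j') μ μ) (x : ℝ) (m : ℕ) (j₀ : Fin B) :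
    μ {ω | m ≤ (Finset.univ.filter (fun j => X j ω ≤ x)).card}
      = ∑ k ∈ Finset.Icc m B, (B.choose k : ℝ≥0∞) * (μ {ω | X j₀ ω ≤ x}) ^ k
          * (1 - μ {ω | X j₀ ω ≤ x}) ^ (B - k) := by
  set P := μ {ω | X j₀ ω ≤ x} with hPdef
  set A : Fin B → Set Ω := fun i => X i ⁻¹' Set.Iic x with hAdef
  have hAmeas : ∀ i, MeasurableSet (A i) := fun i => (hmeas i) measurableSet_Iic
  have hPA : ∀ i, μ (A i) = P := by
    intro i
    exact (hid i j₀).measure_mem_eq measurableSet_Iic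
  set As : Finset (Fin B) → Set Ω := fun s => ⋂ i, (if i ∈ s then A i else (A i)ᶜ) with hAsdef
  set S : Finset (Finset (Fin B)) := Finset.univ.filter (fun s => m ≤ s.card) with hSdef
  have hunion : {ω | m ≤ (Finset.univ.filter (fun j => X j ω ≤ x)).card} = ⋃ s ∈ S, As s := by
    ext ω
    simp only [Set.mem_setOf_eq, Set.mem_iUnion, hAsdef, Set.mem_iInter, hSdef,
      Finset.mem_filter, Finset.mem_univ, true_and]
    constructor
    · intro h
      refine ⟨Finset.univ.filter (fun j => X j ω ≤ x), h, fun i => ?_⟩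
      by_cases hi : X i ω ≤ x <;> simp [hAdef, hi]
    · rintro ⟨s, hs, hsa⟩
      have : Finset.univ.filter (fun j => X j ω ≤ x) = s := by
        ext i
        have := hsa i
        by_cases hi : i ∈ s <;> simp [hi, hAdef] at this <;> simp [hi, this]
      rw [this]; exact hs
  have hdisj : (S : Set (Finset (Fin B))).PairwiseDisjoint As := by
    intro s hs s' hs' hne
    refine Set.disjoint_left.2 fun ω hω hω' => hne ?_
    ext i
    simp only [hAsdef, Set.mem_iInter] at hω hω'
    have h1 := hω i
    have h2 := hω' i
    by_cases hi : i ∈ s <;> by_cases hi' : i ∈ s' <;>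
      simp [hi, hi', hAdef] at h1 h2 ⊢ <;> linarith
  have hAsmeas : ∀ s, MeasurableSet (As s) := by
    intro s
    refine MeasurableSet.iInter fun i => ?_
    by_cases hi : i ∈ s <;> simp [hi, hAmeas i, (hAmeas i).compl]
  have hAsμ : ∀ s : Finset (Fin B), μ (As s) = P ^ s.card * (1 - P) ^ (B - s.card) := by
    intro s
    have := hind.meas_iInter (s := fun i => if i ∈ s then A i else (A i)ᶜ)
      (fun i => ⟨if i ∈ s then Set.Iic x else (Set.Iic x)ᶜ, by
        by_cases hi : i ∈ s <;> simp [hi, measurableSet_Iic, measurableSet_Iic.compl], by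
        by_cases hi : i ∈ s <;> simp only [hi, if_true, if_false, hAdef, Set.preimage_compl]⟩)
    rw [hAsdef]
    rw [this]
    have hfac : ∀ i : Fin B, μ (if i ∈ s then A i else (A i)ᶜ) = if i ∈ s then P else 1 - P := by
      intro i
      by_cases hi : i ∈ s
      · simp [hi, hPA i]
      · simp [hi, prob_compl_eq_one_sub (hAmeas i), hPA i]
    simp_rw [hfac]
    rw [← Finset.prod_mul_prod_compl s]
    rw [Finset.prod_congr rfl (fun i hi => if_pos hi),
        Finset.prod_congr rfl (fun i hi => if_neg (Finset.mem_compl.1 hi))]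
    rw [Finset.prod_const, Finset.prod_const, Finset.card_compl, Fintype.card_fin]
  rw [hunion, measure_biUnion_finset hdisj (fun s _ => hAsmeas s)]
  have hmaps : ∀ s ∈ S, s.card ∈ Finset.Icc m B := by
    intro s hs
    simp only [hSdef, Finset.mem_filter] at hs
    exact Finset.mem_Icc.2 ⟨hs.2, (Finset.card_le_univ s).trans_eq (by simp)⟩
  rw [← Finset.sum_fiberwise_of_maps_to hmaps (fun s => μ (As s))]
  refine Finset.sum_congr rfl fun k hk => ?_
  have hfilter : S.filter (fun s => s.card = k) = Finset.powersetCard k Finset.univ := by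
    ext s
    simp only [hSdef, Finset.mem_filter, Finset.mem_univ, true_and,
      Finset.mem_powersetCard_univ]
    constructor
    · rintro ⟨_, h⟩; exact h
    · rintro rfl; exact ⟨(Finset.mem_Icc.1 hk).1, rfl⟩
  rw [hfilter]
  have : ∀ s ∈ Finset.powersetCard k Finset.univ, μ (As s) = P ^ k * (1 - P) ^ (B - k) := by
    intro s hs
    rw [hAsμ s, (Finset.mem_powersetCard_univ.1 hs)]
  rw [Finset.sum_congr rfl this, Finset.sum_const, Finset.card_powersetCard, Finset.card_univ,
    Fintype.card_fin, nsmul_eq_mul, mul_assoc]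

noncomputable def binomTail (B m : ℕ) (p : ℝ) : ℝ :=
  ∑ k ∈ Finset.Icc m B, (B.choose k : ℝ) * p ^ k * (1 - p) ^ (B - k)

lemma binomTail_hasDerivAt (B m : ℕ) (hm : 1 ≤ m) (hmB : m ≤ B) (p : ℝ) :
    HasDerivAt (binomTail B m)
      ((m : ℝ) * (B.choose m : ℝ) * p ^ (m - 1) * (1 - p) ^ (B - m)) p := by
  set u : ℕ → ℝ := fun j => (j : ℝ) * (B.choose j : ℝ) * p ^ (j - 1) * (1 - p) ^ (B - j)
    with hu
  have hterm : ∀ k ∈ Finset.Icc m B, HasDerivAt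
      (fun q : ℝ => (B.choose k : ℝ) * q ^ k * (1 - q) ^ (B - k)) (u k - u (k + 1)) p := by
    intro k hk
    obtain ⟨hk1, hk2⟩ := Finset.mem_Icc.1 hk
    have h1 : HasDerivAt (fun q : ℝ => q ^ k) ((k : ℝ) * p ^ (k - 1)) p := hasDerivAt_pow k p
    have h0 : HasDerivAt (fun q : ℝ => 1 - q) (-1) p := by
      simpa using (hasDerivAt_id p).const_sub 1
    have h2 : HasDerivAt (fun q : ℝ => (1 - q) ^ (B - k))
        ((((B - k : ℕ) : ℝ) * (1 - p) ^ (B - k - 1)) * (-1)) p :=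
      (hasDerivAt_pow (B - k) (1 - p)).comp p h0
    have h3 := (h1.mul h2).const_mul (B.choose k : ℝ)
    have hkey : u k - u (k + 1) = (B.choose k : ℝ) *
        ((k : ℝ) * p ^ (k-1) * (1-p) ^ (B-k)
          + p ^ k * ((((B-k : ℕ) : ℝ) * (1-p) ^ (B-k-1)) * (-1))) := by
      have hchoose : ((B - k : ℕ) : ℝ) * (B.choose k : ℝ)
          = ((k + 1 : ℕ) : ℝ) * (B.choose (k+1) : ℝ) := by
        have h' : B.choose (k+1) * (k+1) = B.choose k * (B - k) := Nat.choose_succ_right_eq B k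
        have h'' := congrArg (fun n : ℕ => (n : ℝ)) h'
        push_cast at h'' ⊢
        linarith
      have hBk : B - (k + 1) = B - k - 1 := by omega
      have hk1' : k + 1 - 1 = k := by omega
      simp only [hu, hBk, hk1']
      rw [← hchoose]
      ring
    rw [hkey]
    exact h3.congr_of_eventuallyEq (Filter.Eventually.of_forall fun q => by
      simp only [Pi.mul_apply]; ring)
  have hsum : HasDerivAt (binomTail B m)
      (∑ k ∈ Finset.Icc m B, (u k - u (k + 1))) p := by
    unfold binomTail
    exact HasDerivAt.fun_sum hterm
  convert hsum using 1
  rw [← Finset.Ico_add_one_right_eq_Icc, Finset.sum_Ico_eq_sum_range]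
  have tele := Finset.sum_range_sub' (fun i => u (m + i)) (B + 1 - m)
  simp only [← Nat.add_assoc] at tele
  rw [tele]
  have h1 : u (m + (B + 1 - m)) = 0 := by
    have heq : m + (B + 1 - m) = B + 1 := by omega
    rw [heq]
    simp [hu, Nat.choose_eq_zero_of_lt (Nat.lt_succ_self B)]
  rw [Nat.add_zero, h1, sub_zero]

lemma binomTail_eq_integral (B m : ℕ) (hm : 1 ≤ m) (hmB : m ≤ B) (p : ℝ) :
    binomTail B m p = (m : ℝ) * (B.choose m : ℝ)
      * ∫ x in (0:ℝ)..p, x ^ (m - 1) * (1 - x) ^ (B - m) := by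
  have hcont : Continuous (fun x : ℝ => (m : ℝ) * (B.choose m : ℝ) * x ^ (m-1) * (1-x) ^ (B-m)) := by
    continuity
  have hftc := intervalIntegral.integral_eq_sub_of_hasDerivAt
    (f := binomTail B m)
    (f' := fun x => (m : ℝ) * (B.choose m : ℝ) * x ^ (m-1) * (1-x) ^ (B-m))
    (a := 0) (b := p)
    (fun x _ => binomTail_hasDerivAt B m hm hmB x)
    (hcont.intervalIntegrable 0 p)
  have h0 : binomTail B m 0 = 0 := by
    apply Finset.sum_eq_zero
    intro k hk
    obtain ⟨hk1, _⟩ := Finset.mem_Icc.1 hk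
    have hz : (0:ℝ) ^ k = 0 := zero_pow (by omega)
    simp [hz]
  rw [h0, sub_zero] at hftc
  rw [mul_assoc, ← intervalIntegral.integral_const_mul, ← intervalIntegral.integral_const_mul, ← hftc]
  apply intervalIntegral.integral_congr
  intro x _
  ring

lemma laplace_pointwise (n : ℕ → ℕ) (hn : Tendsto n atTop atTop) (u : ℝ) :
    Tendsto (fun b => (1 - u^2/(n b : ℝ))^(n b)) atTop (𝓝 (Real.exp (-u^2))) := by
  have h := (Real.tendsto_one_add_div_pow_exp (-u^2)).comp hn
  refine h.congr fun b => ?_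
  simp [sub_eq_add_neg, neg_div]

lemma laplace_bound {n : ℕ} (hn : 1 ≤ n) {u : ℝ} (hu : u^2 ≤ (n:ℝ)) :
    (0:ℝ) ≤ (1 - u^2/(n:ℝ))^n ∧ (1 - u^2/(n:ℝ))^n ≤ Real.exp (-u^2) := by
  have hnpos : (0:ℝ) < n := by exact_mod_cast hn
  have h0 : (0:ℝ) ≤ 1 - u^2/(n:ℝ) := by
    rw [sub_nonneg, div_le_one hnpos]; exact hu
  constructor
  · positivity
  · have h1 : 1 - u^2/(n:ℝ) ≤ Real.exp (-(u^2/(n:ℝ))) := by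
      have := Real.add_one_le_exp (-(u^2/(n:ℝ)))
      linarith
    calc (1 - u^2/(n:ℝ))^n ≤ (Real.exp (-(u^2/(n:ℝ))))^n := pow_le_pow_left₀ h0 h1 n
      _ = Real.exp ((n:ℝ) * (-(u^2/(n:ℝ)))) := by rw [← Real.exp_nat_mul]
      _ = Real.exp (-u^2) := by
          congr 1
          field_simp

lemma sqrt_tendsto_atTop : Tendsto Real.sqrt atTop atTop := by
  refine tendsto_atTop_atTop.2 fun M => ⟨(max M 0)^2, fun x hx => ?_⟩
  calc M ≤ max M 0 := le_max_left M 0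
    _ = Real.sqrt ((max M 0)^2) := (Real.sqrt_sq (le_max_right M 0)).symm
    _ ≤ Real.sqrt x := Real.sqrt_le_sqrt hx

lemma exp_neg_sq_integrable : Integrable (fun u : ℝ => Real.exp (-u^2)) := by
  have := integrable_exp_neg_mul_sq (one_pos)
  simpa using this

lemma tendsto_laplace_integral (n : ℕ → ℕ) (hn : Tendsto n atTop atTop)
    (hn1 : ∀ b, 1 ≤ n b) (s : ℕ → ℝ) (L : ℝ) (hs : Tendsto s atTop (𝓝 L))
    (hsle : ∀ b, s b ≤ Real.sqrt (n b)) :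
    Tendsto (fun b => ∫ u in Set.Ioc (-Real.sqrt (n b)) (s b), (1 - u^2/(n b : ℝ))^(n b))
      atTop (𝓝 (∫ u in Set.Iic L, Real.exp (-u^2))) := by
  set F : ℕ → ℝ → ℝ := fun b => (Set.Ioc (-Real.sqrt (n b)) (s b)).indicator
    (fun u => (1 - u^2/(n b : ℝ))^(n b)) with hF
  have hsqrt : Tendsto (fun b => Real.sqrt (n b)) atTop atTop :=
    sqrt_tendsto_atTop.comp (tendsto_natCast_atTop_atTop.comp hn)
  have hmeas : ∀ b, AEStronglyMeasurable (F b) volume := by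
    intro b
    exact ((continuous_const.sub ((continuous_pow 2).div_const _)).pow _).aestronglyMeasurable.indicator
      measurableSet_Ioc
  have hbound : ∀ b, ∀ᵐ u : ℝ, ‖F b u‖ ≤ Real.exp (-u^2) := by
    intro b
    refine ae_of_all _ fun u => ?_
    rw [hF]
    simp only
    by_cases hu : u ∈ Set.Ioc (-Real.sqrt (n b)) (s b)
    · rw [Set.indicator_of_mem hu]
      have hu2 : u^2 ≤ ((n b : ℕ):ℝ) := by
        obtain ⟨h1, h2⟩ := hu
        have habs : |u| ≤ Real.sqrt (n b) := by
          rw [abs_le]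
          exact ⟨h1.le, h2.trans (hsle b)⟩
        calc u^2 = |u|^2 := (sq_abs u).symm
          _ ≤ (Real.sqrt (n b))^2 := by
              apply pow_le_pow_left₀ (abs_nonneg u) habs
          _ = (n b : ℝ) := Real.sq_sqrt (by positivity)
      obtain ⟨hge, hle⟩ := laplace_bound (hn1 b) hu2
      rw [Real.norm_eq_abs, abs_of_nonneg hge]
      exact hle
    · rw [Set.indicator_of_notMem hu]
      simp [Real.exp_nonneg]
  have hne : ∀ᵐ u : ℝ, u ≠ L := by
    rw [ae_iff]
    simp only [ne_eq, not_not, Set.setOf_eq_eq_singleton]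
    exact volume_singleton
  have hlim : ∀ᵐ u : ℝ, Tendsto (fun b => F b u) atTop
      (𝓝 ((Set.Iic L).indicator (fun u => Real.exp (-u^2)) u)) := by
    filter_upwards [hne] with u hu
    have hev1 : ∀ᶠ b in atTop, -Real.sqrt (n b) < u := by
      filter_upwards [hsqrt.eventually_gt_atTop (-u)] with b hb
      linarith
    rcases lt_or_gt_of_ne hu with hlt | hgt
    · have hev2 : ∀ᶠ b in atTop, u ≤ s b := by
        filter_upwards [hs.eventually (eventually_gt_nhds hlt)] with b hb
        exact hb.le
      have hind : (Set.Iic L).indicator (fun u => Real.exp (-u^2)) u = Real.exp (-u^2) :=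
        Set.indicator_of_mem (Set.mem_Iic.2 hlt.le) _
      rw [hind]
      refine (laplace_pointwise n hn u).congr' ?_
      filter_upwards [hev1, hev2] with b h1 h2
      simp only [hF]
      exact (Set.indicator_of_mem (Set.mem_Ioc.2 ⟨h1, h2⟩) (fun u : ℝ => (1 - u^2/(n b : ℝ))^(n b))).symm
    · have hind : (Set.Iic L).indicator (fun u => Real.exp (-u^2)) u = 0 :=
        Set.indicator_of_notMem (by simp [hgt.le]; exact hgt) _
      rw [hind]
      have hev2 : ∀ᶠ b in atTop, s b < u := hs.eventually (eventually_lt_nhds hgt)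
      refine tendsto_const_nhds.congr' ?_
      filter_upwards [hev2] with b h2
      simp only [hF]
      exact (Set.indicator_of_notMem (fun hmem => absurd hmem.2 (not_le.2 h2)) (fun u : ℝ => (1 - u^2/(n b : ℝ))^(n b))).symm
  have key := MeasureTheory.tendsto_integral_of_dominated_convergence
    (bound := fun u : ℝ => Real.exp (-u^2)) hmeas exp_neg_sq_integrable hbound hlim
  have h1 : ∀ b, (∫ u, F b u) = ∫ u in Set.Ioc (-Real.sqrt (n b)) (s b), (1 - u^2/(n b : ℝ))^(n b) := by
    intro b
    rw [hF]
    exact integral_indicator measurableSet_Ioc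
  have h2 : (∫ u, (Set.Iic L).indicator (fun u => Real.exp (-u^2)) u)
      = ∫ u in Set.Iic L, Real.exp (-u^2) := integral_indicator measurableSet_Iic
  rw [← h2]
  exact key.congr h1

lemma tendsto_laplace_integral_full (n : ℕ → ℕ) (hn : Tendsto n atTop atTop)
    (hn1 : ∀ b, 1 ≤ n b) :
    Tendsto (fun b => ∫ u in Set.Ioc (-Real.sqrt (n b)) (Real.sqrt (n b)), (1 - u^2/(n b : ℝ))^(n b))
      atTop (𝓝 (Real.sqrt π)) := by
  set F : ℕ → ℝ → ℝ := fun b => (Set.Ioc (-Real.sqrt (n b)) (Real.sqrt (n b))).indicator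
    (fun u => (1 - u^2/(n b : ℝ))^(n b)) with hF
  have hsqrt : Tendsto (fun b => Real.sqrt (n b)) atTop atTop :=
    sqrt_tendsto_atTop.comp (tendsto_natCast_atTop_atTop.comp hn)
  have hmeas : ∀ b, AEStronglyMeasurable (F b) volume := by
    intro b
    exact ((continuous_const.sub ((continuous_pow 2).div_const _)).pow _).aestronglyMeasurable.indicator
      measurableSet_Ioc
  have hbound : ∀ b, ∀ᵐ u : ℝ, ‖F b u‖ ≤ Real.exp (-u^2) := by
    intro b
    refine ae_of_all _ fun u => ?_
    rw [hF]
    simp only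
    by_cases hu : u ∈ Set.Ioc (-Real.sqrt (n b)) (Real.sqrt (n b))
    · rw [Set.indicator_of_mem hu]
      have hu2 : u^2 ≤ ((n b : ℕ):ℝ) := by
        obtain ⟨hh1, hh2⟩ := hu
        have habs : |u| ≤ Real.sqrt (n b) := by
          rw [abs_le]; exact ⟨hh1.le, hh2⟩
        calc u^2 = |u|^2 := (sq_abs u).symm
          _ ≤ (Real.sqrt (n b))^2 := pow_le_pow_left₀ (abs_nonneg u) habs 2
          _ = (n b : ℝ) := Real.sq_sqrt (by positivity)
      obtain ⟨hge, hle⟩ := laplace_bound (hn1 b) hu2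
      rw [Real.norm_eq_abs, abs_of_nonneg hge]
      exact hle
    · rw [Set.indicator_of_notMem hu]
      simp [Real.exp_nonneg]
  have hlim : ∀ᵐ u : ℝ, Tendsto (fun b => F b u) atTop (𝓝 (Real.exp (-u^2))) := by
    refine ae_of_all _ fun u => ?_
    have hev1 : ∀ᶠ b in atTop, -Real.sqrt (n b) < u := by
      filter_upwards [hsqrt.eventually_gt_atTop (-u)] with b hb
      linarith
    have hev2 : ∀ᶠ b in atTop, u ≤ Real.sqrt (n b) := hsqrt.eventually_ge_atTop u
    refine (laplace_pointwise n hn u).congr' ?_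
    filter_upwards [hev1, hev2] with b h1 h2
    simp only [hF]
    exact (Set.indicator_of_mem (Set.mem_Ioc.2 ⟨h1, h2⟩) (fun u : ℝ => (1 - u^2/(n b : ℝ))^(n b))).symm
  have key := MeasureTheory.tendsto_integral_of_dominated_convergence
    (bound := fun u : ℝ => Real.exp (-u^2)) hmeas exp_neg_sq_integrable hbound hlim
  have h1 : ∀ b, (∫ u, F b u) = ∫ u in Set.Ioc (-Real.sqrt (n b)) (Real.sqrt (n b)), (1 - u^2/(n b : ℝ))^(n b) := by
    intro b
    rw [hF]
    exact integral_indicator measurableSet_Ioc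
  have h2 : (∫ u : ℝ, Real.exp (-u^2)) = Real.sqrt π := by
    have := integral_gaussian 1
    simpa using this
  rw [← h2]
  exact key.congr h1
lemma binomTail_one (B m : ℕ) (hmB : m ≤ B) : binomTail B m 1 = 1 := by
  unfold binomTail
  rw [Finset.sum_eq_single B]
  · simp
  · intro k hk hne
    obtain ⟨_, hk2⟩ := Finset.mem_Icc.1 hk
    have : 0 < B - k := by omega
    simp [zero_pow (by omega : B - k ≠ 0)]
  · intro h
    exact absurd (Finset.mem_Icc.2 ⟨hmB, le_refl B⟩) h

lemma binomTail_ratio (n : ℕ) (hn : 1 ≤ n) (p : ℝ) :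
    binomTail (2*n+1) (n+1) p
      = (∫ u in (-Real.sqrt n)..(2*Real.sqrt n*(p-1/2)), (1 - u^2/(n:ℝ))^n)
        / (∫ u in (-Real.sqrt n)..(Real.sqrt n), (1 - u^2/(n:ℝ))^n) := by
  have hnpos : (0:ℝ) < n := by exact_mod_cast hn
  have hsq : (0:ℝ) < Real.sqrt n := Real.sqrt_pos.2 hnpos
  have hsqsq : Real.sqrt n * Real.sqrt n = n := Real.mul_self_sqrt hnpos.le
  set c : ℝ := 1/(2*Real.sqrt n) with hc
  have hcne : c ≠ 0 := by
    rw [hc]; positivity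
  have key : ∀ q : ℝ, (∫ x in (0:ℝ)..q, x^n*(1-x)^n)
      = c * ((1/4:ℝ)^n * ∫ u in (-Real.sqrt n)..(2*Real.sqrt n*(q-1/2)), (1 - u^2/(n:ℝ))^n) := by
    intro q
    have hsub := intervalIntegral.integral_comp_mul_add
      (f := fun x : ℝ => x^n*(1-x)^n) (c := c) hcne (d := 1/2)
      (a := -Real.sqrt n) (b := 2*Real.sqrt n*(q-1/2))
    have hend1 : c * (-Real.sqrt n) + 1/2 = 0 := by
      rw [hc]; field_simp; ring
    have hend2 : c * (2*Real.sqrt n*(q-1/2)) + 1/2 = q := by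
      rw [hc]; field_simp; ring
    rw [hend1, hend2] at hsub
    have hint : ∀ u : ℝ, (c*u + 1/2)^n * (1 - (c*u + 1/2))^n
        = (1/4:ℝ)^n * (1 - u^2/(n:ℝ))^n := by
      intro u
      have h1 : (c*u + 1/2) * (1 - (c*u + 1/2)) = (1/4) * (1 - u^2/(n:ℝ)) := by
        have hc2 : c^2 = 1/(4*n) := by
          rw [hc]; rw [div_pow]; rw [mul_pow]
          rw [sq (Real.sqrt n), hsqsq]; norm_num
        have : (c*u + 1/2) * (1 - (c*u + 1/2)) = 1/4 - c^2*u^2 := by ring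
        rw [this, hc2]
        field_simp
      rw [← mul_pow, ← mul_pow, h1]
    have hleft : (∫ u in (-Real.sqrt n)..(2*Real.sqrt n*(q-1/2)),
        (fun x : ℝ => x^n*(1-x)^n) (c * u + 1/2))
        = ∫ u in (-Real.sqrt n)..(2*Real.sqrt n*(q-1/2)), (1/4:ℝ)^n * (1 - u^2/(n:ℝ))^n := by
      apply intervalIntegral.integral_congr
      intro u _
      exact hint u
    rw [hleft] at hsub
    rw [intervalIntegral.integral_const_mul] at hsub
    rw [hsub, smul_eq_mul, ← mul_assoc, mul_inv_cancel₀ hcne, one_mul]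
  have hm1 : (n + 1 : ℕ) - 1 = n := by omega
  have hBm : (2*n+1) - (n+1) = n := by omega
  have hT : ∀ q : ℝ, binomTail (2*n+1) (n+1) q
      = ((n+1 : ℕ) : ℝ) * ((2*n+1).choose (n+1) : ℝ) * c * (1/4:ℝ)^n
        * ∫ u in (-Real.sqrt n)..(2*Real.sqrt n*(q-1/2)), (1 - u^2/(n:ℝ))^n := by
    intro q
    rw [binomTail_eq_integral (2*n+1) (n+1) (by omega) (by omega) q, hm1, hBm, key q]
    ring
  set D : ℝ := ((n+1 : ℕ) : ℝ) * ((2*n+1).choose (n+1) : ℝ) * c * (1/4:ℝ)^n with hD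
  have hone : D * (∫ u in (-Real.sqrt n)..(Real.sqrt n), (1 - u^2/(n:ℝ))^n) = 1 := by
    have := hT 1
    rw [binomTail_one _ _ (by omega)] at this
    have hs1 : 2*Real.sqrt n*((1:ℝ)-1/2) = Real.sqrt n := by ring
    rw [hs1] at this
    linarith
  have hJne : (∫ u in (-Real.sqrt n)..(Real.sqrt n), (1 - u^2/(n:ℝ))^n) ≠ 0 := by
    intro h
    rw [h, mul_zero] at hone
    exact one_ne_zero hone.symm
  rw [hT p]
  rw [eq_div_iff hJne]
  calc D * (∫ u in (-Real.sqrt n)..(2*Real.sqrt n*(p-1/2)), (1 - u^2/(n:ℝ))^n)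
      * (∫ u in (-Real.sqrt n)..(Real.sqrt n), (1 - u^2/(n:ℝ))^n)
      = (D * (∫ u in (-Real.sqrt n)..(Real.sqrt n), (1 - u^2/(n:ℝ))^n))
        * (∫ u in (-Real.sqrt n)..(2*Real.sqrt n*(p-1/2)), (1 - u^2/(n:ℝ))^n) := by ring
    _ = _ := by rw [hone]; ring

lemma integral_Iic_comp_mul_left (f : ℝ → ℝ) {c : ℝ} (hc : 0 < c) (t : ℝ) :
    ∫ x in Set.Iic t, f (c * x) = c⁻¹ * ∫ u in Set.Iic (c * t), f u := by
  have h1 : ∀ x : ℝ, (Set.Iic t).indicator (fun x => f (c*x)) x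
      = (Set.Iic (c*t)).indicator f (c*x) := by
    intro x
    by_cases hx : x ≤ t
    · rw [Set.indicator_of_mem (Set.mem_Iic.2 hx),
        Set.indicator_of_mem (Set.mem_Iic.2 (mul_le_mul_of_nonneg_left hx hc.le))]
    · rw [Set.indicator_of_notMem (fun h => hx (Set.mem_Iic.1 h)),
        Set.indicator_of_notMem (fun h => hx ((mul_le_mul_iff_right₀ hc).1 (Set.mem_Iic.1 h)))]
  rw [← integral_indicator measurableSet_Iic, ← integral_indicator measurableSet_Iic]
  calc (∫ x, (Set.Iic t).indicator (fun x => f (c*x)) x)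
      = ∫ x, (Set.Iic (c*t)).indicator f (c*x) := by
        congr 1; ext x; exact h1 x
    _ = |c⁻¹| • ∫ u, (Set.Iic (c*t)).indicator f u :=
        MeasureTheory.Measure.integral_comp_mul_left ((Set.Iic (c*t)).indicator f) c
    _ = c⁻¹ * ∫ u, (Set.Iic (c*t)).indicator f u := by
        rw [abs_of_pos (inv_pos.2 hc), smul_eq_mul]

lemma gauss_cdf_eq (g t : ℝ) (hg : 0 < g) :
    ((gaussianReal 0 (Real.toNNReal (1 / (4 * g ^ 2)))) (Set.Iic t)).toReal
      = (∫ u in Set.Iic (Real.sqrt 2 * g * t), Real.exp (-u^2)) / Real.sqrt π := by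
  set v : ℝ≥0 := Real.toNNReal (1 / (4 * g ^ 2)) with hv
  have hvpos : (0:ℝ) < 1 / (4 * g ^ 2) := by positivity
  have hvne : v ≠ 0 := by
    rw [hv]
    simp only [ne_eq, Real.toNNReal_eq_zero, not_le]
    exact hvpos
  have hvr : (v : ℝ) = 1 / (4 * g ^ 2) := Real.coe_toNNReal _ hvpos.le
  rw [gaussianReal_apply_eq_integral 0 hvne, ENNReal.toReal_ofReal]
  swap
  · exact setIntegral_nonneg measurableSet_Iic fun x _ => gaussianPDFReal_nonneg 0 v x
  set c : ℝ := Real.sqrt 2 * g with hcdef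
  have hcpos : 0 < c := by positivity
  have hc2 : c^2 = 2 * g^2 := by
    rw [hcdef, mul_pow, Real.sq_sqrt (by norm_num : (2:ℝ) ≥ 0)]
  have hpdf : ∀ x : ℝ, gaussianPDFReal 0 v x = (Real.sqrt (2*π*v))⁻¹ * Real.exp (-(c*x)^2) := by
    intro x
    rw [gaussianPDFReal]
    congr 1
    rw [mul_pow, hc2]
    rw [hvr]
    have hg2 : (4:ℝ) * g^2 ≠ 0 := by positivity
    field_simp
    ring
  simp_rw [hpdf]
  rw [MeasureTheory.integral_const_mul]
  rw [integral_Iic_comp_mul_left (fun u => Real.exp (-u^2)) hcpos t]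
  have hconst : (Real.sqrt (2*π*v))⁻¹ * (c⁻¹) = (Real.sqrt π)⁻¹ := by
    have h2 : Real.sqrt (2*π*(v:ℝ)) = Real.sqrt π / c := by
      rw [hvr]
      have : 2 * π * (1 / (4*g^2)) = π / (2 * g^2) := by
        field_simp; ring
      rw [this, ← hc2, Real.sqrt_div (le_of_lt Real.pi_pos), Real.sqrt_sq hcpos.le]
    rw [h2]
    field_simp
  rw [← mul_assoc, hconst]
  rw [div_eq_inv_mul]

lemma sqrt_tendsto_atTop' : Tendsto Real.sqrt atTop atTop := by
  refine tendsto_atTop_atTop.2 fun K => ⟨(max K 0)^2, fun x hx => ?_⟩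
  calc K ≤ max K 0 := le_max_left K 0
    _ = Real.sqrt ((max K 0)^2) := (Real.sqrt_sq (le_max_right K 0)).symm
    _ ≤ Real.sqrt x := Real.sqrt_le_sqrt hx

lemma s_tendsto (G : ℝ → ℝ) (g t M : ℝ) (hG0 : G 0 = 1/2) (hG_deriv : HasDerivAt G g 0)
    (B : ℕ → ℕ) (hBpos : ∀ b, 0 < B b) (hBtop : Tendsto B atTop atTop)
    (hBratio : Tendsto (fun b : ℕ => (B b : ℝ)/(b:ℝ)) atTop (𝓝 0))
    (p : ℕ → ℝ) (hp : ∀ b, |p b - G (t / Real.sqrt (B b))| ≤ M / Real.sqrt b)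
    (n : ℕ → ℕ) (hn : ∀ b, B b = 2 * n b + 1) :
    Tendsto (fun b => 2 * Real.sqrt (n b) * (p b - 1/2)) atTop
      (𝓝 (Real.sqrt 2 * g * t)) := by
  have hsqB : ∀ b, (0:ℝ) < Real.sqrt (B b) := fun b =>
    Real.sqrt_pos.2 (by exact_mod_cast hBpos b)
  have hsqBtop : Tendsto (fun b => Real.sqrt (B b)) atTop atTop :=
    sqrt_tendsto_atTop'.comp (tendsto_natCast_atTop_atTop.comp hBtop)
  set x : ℕ → ℝ := fun b => t / Real.sqrt (B b) with hx
  set w : ℕ → ℝ := fun b => Real.sqrt (B b) * (p b - 1/2) with hw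
  set c : ℕ → ℝ := fun b => 2 * Real.sqrt (n b) / Real.sqrt (B b) with hcdef
  -- c → √2
  have hc_eq : ∀ b, c b = Real.sqrt (2 - 2/(B b : ℝ)) := by
    intro b
    have hBne : ((B b : ℝ)) ≠ 0 := by exact_mod_cast (hBpos b).ne'
    have h4n : (4 * (n b) : ℝ) = 2 * (B b : ℝ) - 2 := by
      have := hn b
      have : ((B b : ℕ) : ℝ) = 2 * (n b : ℝ) + 1 := by exact_mod_cast congrArg (fun k : ℕ => (k:ℝ)) this
      linarith
    have h1 : 2 * Real.sqrt (n b) = Real.sqrt (4 * (n b)) := by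
      rw [show (4 : ℝ) * (n b) = 2^2 * (n b) from by norm_num, Real.sqrt_mul (by positivity),
        Real.sqrt_sq (by norm_num : (0:ℝ) ≤ 2)]
    rw [hcdef]
    simp only
    rw [h1, ← Real.sqrt_div (by positivity), h4n]
    congr 1
    field_simp
  have hc_lim : Tendsto c atTop (𝓝 (Real.sqrt 2)) := by
    have h2 : Tendsto (fun b => 2 - 2/(B b:ℝ)) atTop (𝓝 2) := by
      have : Tendsto (fun b => (2:ℝ)/(B b:ℝ)) atTop (𝓝 0) :=
        tendsto_const_nhds.div_atTop (tendsto_natCast_atTop_atTop.comp hBtop)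
      simpa using tendsto_const_nhds.sub this
    have := (Real.continuous_sqrt.tendsto 2).comp h2
    refine this.congr fun b => (hc_eq b).symm
  -- w → g * t
  have hterm1 : Tendsto (fun b => Real.sqrt (B b) * (p b - G (x b))) atTop (𝓝 0) := by
    have hbnd : ∀ᶠ (b:ℕ) in atTop, ‖Real.sqrt (B b) * (p b - G (x b))‖
        ≤ M * Real.sqrt ((B b : ℝ)/(b:ℝ)) := by
      filter_upwards [eventually_ge_atTop 1] with b hb
      have hbpos : (0:ℝ) < b := by exact_mod_cast hb
      have hsqb : (0:ℝ) < Real.sqrt b := Real.sqrt_pos.2 hbpos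
      rw [Real.norm_eq_abs, abs_mul, abs_of_nonneg (Real.sqrt_nonneg _)]
      calc Real.sqrt (B b) * |p b - G (x b)| ≤ Real.sqrt (B b) * (M / Real.sqrt b) :=
            mul_le_mul_of_nonneg_left (hp b) (Real.sqrt_nonneg _)
        _ = M * (Real.sqrt (B b) / Real.sqrt b) := by ring
        _ = M * Real.sqrt ((B b : ℝ)/(b:ℝ)) := by rw [Real.sqrt_div (by positivity)]
    have h0 : Tendsto (fun b => Real.sqrt ((B b:ℝ)/(b:ℝ))) atTop (𝓝 0) := by
      have hcont := (Real.continuous_sqrt.tendsto 0).comp hBratio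
      rw [Real.sqrt_zero] at hcont
      exact hcont
    have hg0 : Tendsto (fun b => M * Real.sqrt ((B b:ℝ)/(b:ℝ))) atTop (𝓝 0) := by
      simpa using tendsto_const_nhds.mul h0
    exact squeeze_zero_norm' hbnd hg0
  have hterm2 : Tendsto (fun b => Real.sqrt (B b) * (G (x b) - 1/2)) atTop (𝓝 (g * t)) := by
    rcases eq_or_ne t 0 with rfl | ht
    · have : ∀ b, Real.sqrt (B b) * (G (x b) - 1/2) = 0 := by
        intro b
        rw [hx]
        simp [hG0]
      rw [show g * 0 = 0 from by ring]
      exact Tendsto.congr (fun b => (this b).symm) tendsto_const_nhds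
    · have hslope := hasDerivAt_iff_tendsto_slope.1 hG_deriv
      have hxlim : Tendsto x atTop (𝓝[≠] (0:ℝ)) := by
        apply tendsto_nhdsWithin_of_tendsto_nhds_of_eventually_within
        · have hinv : Tendsto (fun b => (Real.sqrt (B b))⁻¹) atTop (𝓝 0) :=
            tendsto_inv_atTop_zero.comp hsqBtop
          have hconst : Tendsto (fun _ : ℕ => t) atTop (𝓝 t) := tendsto_const_nhds
          have := hconst.mul hinv
          simpa [hx, div_eq_mul_inv] using this
        · refine Eventually.of_forall fun b => ?_
          simp only [hx, Set.mem_compl_iff, Set.mem_singleton_iff]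
          exact div_ne_zero ht (hsqB b).ne'
      have hcomp := hslope.comp hxlim
      have heq : ∀ b, Real.sqrt (B b) * (G (x b) - 1/2) = t * slope G 0 (x b) := by
        intro b
        rw [slope_def_field, hG0, sub_zero]
        have h1 : x b = t / Real.sqrt (B b) := rfl
        rw [h1]
        field_simp
      have hconst : Tendsto (fun _ : ℕ => t) atTop (𝓝 t) := tendsto_const_nhds
      have hfin := hconst.mul hcomp
      rw [show g * t = t * g from mul_comm g t]
      exact hfin.congr fun b => (heq b).symm
  have hw_lim : Tendsto w atTop (𝓝 (g * t)) := by
    have hsum := hterm1.add hterm2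
    rw [zero_add] at hsum
    refine hsum.congr fun b => ?_
    rw [hw]
    ring
  have hfinal := hc_lim.mul hw_lim
  rw [show Real.sqrt 2 * (g * t) = Real.sqrt 2 * g * t from by ring] at hfinal
  refine hfinal.congr fun b => ?_
  rw [hcdef, hw]
  simp only
  field_simp [(hsqB b).ne']
lemma binom_sum_toReal (B m : ℕ) (P : ℝ≥0∞) (hP : P ≤ 1) :
    (∑ k ∈ Finset.Icc m B, (B.choose k : ℝ≥0∞) * P^k * (1-P)^(B-k)).toReal
      = binomTail B m P.toReal := by
  have hPne : P ≠ ⊤ := fun h => by simp [h] at hP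
  have hterm : ∀ k ∈ Finset.Icc m B,
      (B.choose k : ℝ≥0∞) * P^k * (1-P)^(B-k) ≠ ⊤ := by
    intro k _
    apply ENNReal.mul_ne_top
    apply ENNReal.mul_ne_top
    · exact ENNReal.natCast_ne_top _
    · exact ENNReal.pow_ne_top hPne
    · exact ENNReal.pow_ne_top (by
        intro h
        have : (1:ℝ≥0∞) - P ≤ 1 := tsub_le_self
        rw [h] at this
        simp at this)
  rw [ENNReal.toReal_sum hterm]
  refine Finset.sum_congr rfl fun k _ => ?_
  rw [ENNReal.toReal_mul, ENNReal.toReal_mul, ENNReal.toReal_pow, ENNReal.toReal_pow,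
    ENNReal.toReal_natCast, ENNReal.toReal_sub_of_le hP ENNReal.one_ne_top, ENNReal.toReal_one]

/-- (Median CLT for triangular arrays with perturbed distributions.)
Let G be a CDF with G(0) = 1/2 that is differentiable at 0 with derivative g > 0.
Let B(b) be odd, B(b) → ∞, B(b)/b → 0, and let M > 0. If for each b the variables
X_{1,b},…,X_{B(b),b} are i.i.d. with common CDF F_b satisfying
sup_x |F_b(x) − G(x)| ≤ M/√b, then √(B(b)) · median(X_{1,b},…,X_{B(b),b}) converges in
distribution to N(0, 1/(4g²)) (stated as pointwise convergence of CDFs, the Gaussian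
CDF being continuous). -/
theorem median_clt_triangular_array
    {Ω : Type*} [MeasurableSpace Ω] (μ : Measure Ω) [IsProbabilityMeasure μ]
    (G : ℝ → ℝ) (g : ℝ)
    (hG_mono : Monotone G) (hG_bounds : ∀ x, 0 ≤ G x ∧ G x ≤ 1)
    (hG_right_cont : ∀ x, ContinuousWithinAt G (Set.Ici x) x)
    (hG_bot : Tendsto G atBot (𝓝 0)) (hG_top : Tendsto G atTop (𝓝 1))
    (hG0 : G 0 = 1 / 2) (hG_deriv : HasDerivAt G g 0) (hg_pos : 0 < g)
    (B : ℕ → ℕ) (hBodd : ∀ b, Odd (B b))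
    (hBtop : Tendsto B atTop atTop)
    (hBratio : Tendsto (fun b : ℕ => (B b : ℝ) / (b : ℝ)) atTop (𝓝 0))
    (M : ℝ) (hM : 0 < M)
    (X : (b : ℕ) → Fin (B b) → Ω → ℝ)
    (hmeas : ∀ b j, Measurable (X b j))
    (hindep : ∀ b, iIndepFun (X b) μ)
    (hident : ∀ b j j', IdentDistrib (X b j) (X b j') μ μ)
    (hcdf_close : ∀ b (j : Fin (B b)) (x : ℝ),
      |(μ {ω | X b j ω ≤ x}).toReal - G x| ≤ M / Real.sqrt b) :
    ∀ t : ℝ,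
      Tendsto (fun b : ℕ =>
          (μ {ω | Real.sqrt (B b) * medianFin (fun j => X b j ω) ≤ t}).toReal)
        atTop
        (𝓝 (((gaussianReal 0 (Real.toNNReal (1 / (4 * g ^ 2)))) (Set.Iic t)).toReal)) := by
  intro t
  have hBpos : ∀ b, 0 < B b := fun b => (hBodd b).pos
  set n : ℕ → ℕ := fun b => (B b - 1) / 2 with hndef
  have hBn : ∀ b, B b = 2 * n b + 1 := by
    intro b
    obtain ⟨k, hk⟩ := hBodd b
    simp only [hndef, hk]
    omega
  set n' : ℕ → ℕ := fun b => max (n b) 1 with hn'def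
  have hn'1 : ∀ b, 1 ≤ n' b := fun b => le_max_right _ _
  have hntop : Tendsto n atTop atTop := by
    refine tendsto_atTop_atTop.2 fun K => ?_
    obtain ⟨N, hN⟩ := tendsto_atTop_atTop.1 hBtop (2 * K + 1)
    exact ⟨N, fun b hb => by have := hN b hb; have := hBn b; omega⟩
  have hn'top : Tendsto n' atTop atTop :=
    tendsto_atTop_mono (fun b => le_max_left _ _) hntop
  set j0 : (b : ℕ) → Fin (B b) := fun b => ⟨0, hBpos b⟩ with hj0
  set xx : ℕ → ℝ := fun b => t / Real.sqrt (B b) with hxx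
  set p : ℕ → ℝ := fun b => (μ {ω | X b (j0 b) ω ≤ xx b}).toReal with hpdef
  have hp0 : ∀ b, 0 ≤ p b := fun b => ENNReal.toReal_nonneg
  have hp1 : ∀ b, p b ≤ 1 := by
    intro b
    have h := prob_le_one (μ := μ) (s := {ω | X b (j0 b) ω ≤ xx b})
    calc p b ≤ (1 : ℝ≥0∞).toReal := ENNReal.toReal_mono ENNReal.one_ne_top h
      _ = 1 := ENNReal.toReal_one
  set s : ℕ → ℝ := fun b => 2 * Real.sqrt (n b) * (p b - 1/2) with hsdef
  -- s converges to √2 g t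
  have hs_lim : Tendsto s atTop (𝓝 (Real.sqrt 2 * g * t)) := by
    refine s_tendsto G g t M hG0 hG_deriv B hBpos hBtop hBratio p ?_ n hBn
    intro b
    exact hcdf_close b (j0 b) (t / Real.sqrt (B b))
  -- bounds on s
  have hs_le : ∀ b, s b ≤ Real.sqrt (n' b) := by
    intro b
    rcases Nat.lt_or_ge (n b) 1 with h0 | h1
    · have hnb : n b = 0 := by omega
      have : s b = 0 := by
        simp [hsdef, hnb]
      rw [this]
      positivity
    · have hn'b : n' b = n b := by simp [hn'def]; omega
      rw [hn'b, hsdef]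
      calc 2 * Real.sqrt (n b) * (p b - 1/2) ≤ 2 * Real.sqrt (n b) * (1/2) := by
            apply mul_le_mul_of_nonneg_left _ (by positivity)
            have := hp1 b
            linarith
        _ = Real.sqrt (n b) := by ring
  have hs_ge : ∀ b, 1 ≤ n b → -Real.sqrt (n b) ≤ s b := by
    intro b _
    rw [hsdef]
    have h1 : (-(1/2) : ℝ) ≤ p b - 1/2 := by have := hp0 b; linarith
    calc -Real.sqrt (n b) = 2 * Real.sqrt (n b) * (-(1/2)) := by ring
      _ ≤ 2 * Real.sqrt (n b) * (p b - 1/2) :=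
          mul_le_mul_of_nonneg_left h1 (by positivity)
  -- the two integral limits
  have hNum : Tendsto (fun b => ∫ u in Set.Ioc (-Real.sqrt (n' b)) (s b),
      (1 - u^2/(n' b : ℝ))^(n' b)) atTop
      (𝓝 (∫ u in Set.Iic (Real.sqrt 2 * g * t), Real.exp (-u^2))) :=
    tendsto_laplace_integral n' hn'top hn'1 s _ hs_lim hs_le
  have hDen : Tendsto (fun b => ∫ u in Set.Ioc (-Real.sqrt (n' b)) (Real.sqrt (n' b)),
      (1 - u^2/(n' b : ℝ))^(n' b)) atTop (𝓝 (Real.sqrt π)) :=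
    tendsto_laplace_integral_full n' hn'top hn'1
  have hpi : Real.sqrt π ≠ 0 := by positivity
  have hdiv := hNum.div hDen hpi
  -- identify the limit
  rw [gauss_cdf_eq g t hg_pos]
  -- eventual identification of the prelimit
  refine Tendsto.congr' ?_ hdiv
  have hev : ∀ᶠ b in atTop, 1 ≤ n b := hntop.eventually_ge_atTop 1
  filter_upwards [hev] with b hnb
  have hn'b : n' b = n b := by simp [hn'def]; omega
  have hsqB : (0:ℝ) < Real.sqrt (B b) := Real.sqrt_pos.2 (by exact_mod_cast hBpos b)
  -- event rewriting
  have hset : {ω | Real.sqrt (B b) * medianFin (fun j => X b j ω) ≤ t}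
      = {ω | (B b + 1) / 2 ≤ (Finset.univ.filter (fun j => X b j ω ≤ xx b)).card} := by
    ext ω
    simp only [Set.mem_setOf_eq]
    rw [← medianFin_le_iff (hBodd b) (fun j => X b j ω) (xx b)]
    rw [hxx]
    simp only
    rw [le_div_iff₀ hsqB, mul_comm]
  have hbc := binom_count μ (X b) (hmeas b) (hindep b) (hident b) (xx b) ((B b + 1)/2) (j0 b)
  have hP1 : μ {ω | X b (j0 b) ω ≤ xx b} ≤ 1 := prob_le_one
  have h3 : (μ {ω | Real.sqrt (B b) * medianFin (fun j => X b j ω) ≤ t}).toReal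
      = binomTail (B b) ((B b + 1)/2) (p b) := by
    rw [hset, hbc, binom_sum_toReal _ _ _ hP1]
  rw [h3]
  have hm2 : (B b + 1)/2 = n b + 1 := by have := hBn b; omega
  have hB2 : B b = 2 * n b + 1 := hBn b
  rw [hm2, hB2]
  rw [binomTail_ratio (n b) hnb (p b)]
  have hs_eq : 2 * Real.sqrt (n b) * (p b - 1/2) = s b := rfl
  rw [hs_eq]
  have hio1 : (∫ u in (-Real.sqrt (n b))..(s b), (1 - u^2/(n b : ℝ))^(n b))
      = ∫ u in Set.Ioc (-Real.sqrt (n b)) (s b), (1 - u^2/(n b : ℝ))^(n b) :=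
    intervalIntegral.integral_of_le (hs_ge b hnb)
  have hio2 : (∫ u in (-Real.sqrt (n b))..(Real.sqrt (n b)), (1 - u^2/(n b : ℝ))^(n b))
      = ∫ u in Set.Ioc (-Real.sqrt (n b)) (Real.sqrt (n b)), (1 - u^2/(n b : ℝ))^(n b) :=
    intervalIntegral.integral_of_le (by
      have : (0:ℝ) ≤ Real.sqrt (n b) := Real.sqrt_nonneg _
      linarith)
  rw [hio1, hio2]
  simp only [Pi.div_apply, hn'b]
end
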